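/- arXiv:1903.09011 — 2 statements merged into one kernel-verified Lean document; each statement's English description precedes it below -/
import Mathlib

section
/- If G is obtained by a join of H1 and H2 on vertices v1, v2 of degree at most three, and G contains K_{3,3} as an immersion, then H1 or H2 contains K_{3,3} as an immersion. -/
/-- A finite multigraph without loops: vertices `V`, edges `E`,
each edge has an unordered pair of distinct endpoints. -/
structure Multigraph where
  V : Type
  E : Type
  [fV : Fintype V]
  [fE : Fintype E]
  [dV : DecidableEq V]
  [dE : DecidableEq E]
  ends : E → Sym2 V
  noLoop : ∀ e, ¬ (ends e).IsDiag

attribute [instance] Multigraph.fV Multigraph.fE Multigraph.dV Multigraph.dE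

namespace Multigraph

/-- Walks in a multigraph. -/
inductive Walk (G : Multigraph) : G.V → G.V → Type
  | nil (v : G.V) : Walk G v v
  | cons {u v w : G.V} (e : G.E) (h : G.ends e = s(u, v)) (p : Walk G v w) : Walk G u w

/-- The list of edges traversed by a walk. -/
def Walk.edges {G : Multigraph} : {u v : G.V} → G.Walk u v → List G.E
  | _, _, .nil _ => []
  | _, _, .cons e _ p => e :: p.edges

/-- The list of vertices visited by a walk. -/
def Walk.support {G : Multigraph} : {u v : G.V} → G.Walk u v → List G.V
  | u, _, .nil _ => [u]
  | u, _, .cons _ _ p => u :: p.support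

/-- A walk is a path if it visits no vertex twice. -/
def Walk.IsPath {G : Multigraph} {u v : G.V} (p : G.Walk u v) : Prop := p.support.Nodup

/-- Data of an immersion of `H` into `G`: an injective map on vertices and,
for each edge of `H`, a path in `G` joining the images of its endpoints,
the paths being pairwise edge-disjoint. -/
structure ImmersionData (H G : Multigraph) where
  vmap : H.V → G.V
  inj : Function.Injective vmap
  pstart : H.E → G.V
  pend : H.E → G.V
  walk : ∀ e, G.Walk (pstart e) (pend e)
  ends_eq : ∀ e, s(pstart e, pend e) = (H.ends e).map vmap
  isPath : ∀ e, (walk e).IsPath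
  edgeDisj : ∀ e e', e ≠ e' → List.Disjoint (walk e).edges (walk e').edges

/-- `H` immerses in `G`. -/
def Immerses (H G : Multigraph) : Prop := Nonempty (ImmersionData H G)

/-- Data witnessing that `G` contains a subdivision of `H` as a subgraph
(i.e. `H` is a topological minor of `G`): as an immersion, but moreover the
paths may only meet at images of common endpoints. -/
structure SubdivisionData (H G : Multigraph) extends ImmersionData H G where
  vtxDisj : ∀ e e', e ≠ e' → ∀ x, x ∈ (walk e).support → x ∈ (walk e').support →
    ∃ w, x = vmap w ∧ w ∈ H.ends e ∧ w ∈ H.ends e'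

/-- `G` contains a subdivision of `H` as a subgraph. -/
def ContainsSubdivision (H G : Multigraph) : Prop := Nonempty (SubdivisionData H G)

/-- The complete bipartite graph `K_{3,3}`. -/
def K33 : Multigraph where
  V := Fin 3 ⊕ Fin 3
  E := Fin 3 × Fin 3
  ends e := s(Sum.inl e.1, Sum.inr e.2)
  noLoop e := by simp [Sym2.mk_isDiag_iff]

/-- The complete graph `K_5`. -/
def K5 : Multigraph where
  V := Fin 5
  E := {p : Fin 5 × Fin 5 // p.1 < p.2}
  ends e := s(e.1.1, e.1.2)
  noLoop e := by simpa [Sym2.mk_isDiag_iff] using e.2.ne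

variable (G : Multigraph)

/-- The degree of a vertex: the number of incident edges. -/
def deg (v : G.V) : ℕ := (Finset.univ.filter fun e => v ∈ G.ends e).card

/-- The multiplicity of the (possible) edge between `u` and `v`. -/
def mult (u v : G.V) : ℕ := (Finset.univ.filter fun e => G.ends e = s(u, v)).card

/-- The edge cut determined by a set `A` of vertices. -/
def cut (A : Finset G.V) : Finset G.E :=
  Finset.univ.filter fun e => ∃ u ∈ A, ∃ v ∈ Aᶜ, G.ends e = s(u, v)

/-- Every edge cut of `G` has at least `k` edges. -/
def EdgeConnGe (k : ℕ) : Prop :=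
  ∀ A : Finset G.V, A.Nonempty → A ≠ Finset.univ → k ≤ (G.cut A).card

/-- Internally 4-edge-connected: 3-edge-connected and every 3-edge cut has a
side consisting of a single vertex. -/
def Internally4EC : Prop :=
  G.EdgeConnGe 3 ∧ ∀ A : Finset G.V, A.Nonempty → A ≠ Finset.univ →
    (G.cut A).card = 3 → A.card = 1 ∨ Aᶜ.card = 1

/-- Weakly 5-edge-connected: internally 4-edge-connected and every 4-edge cut
has a side with at most two vertices. -/
def Weakly5EC : Prop :=
  G.Internally4EC ∧ ∀ A : Finset G.V, A.Nonempty → A ≠ Finset.univ →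
    (G.cut A).card = 4 → A.card ≤ 2 ∨ Aᶜ.card ≤ 2

/-- `G` is `d`-regular. -/
def IsRegular (d : ℕ) : Prop := ∀ v, G.deg v = d

/-- `G` is connected. -/
def Connected : Prop := ∀ u v : G.V, Nonempty (G.Walk u v)

/-- `v` is a cut-vertex: the remaining vertices split into two nonempty parts
with no edge between them. -/
def IsCutVertex (v : G.V) : Prop :=
  ∃ C D : Finset G.V, C.Nonempty ∧ D.Nonempty ∧ Disjoint C D ∧ v ∉ C ∧ v ∉ D ∧
    (∀ x : G.V, x ∈ C ∪ D ∨ x = v) ∧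
    ∀ e : G.E, ¬ ∃ u ∈ C, ∃ w ∈ D, G.ends e = s(u, w)

/-- `G` is 2-connected. -/
def TwoConnected : Prop :=
  G.Connected ∧ 3 ≤ Fintype.card G.V ∧ ∀ v, ¬ G.IsCutVertex v

/-- Planarity, via Kuratowski's characterization: no subdivision of `K_5`
nor of `K_{3,3}` as a subgraph. -/
def Planar : Prop := ¬ ContainsSubdivision K5 G ∧ ¬ ContainsSubdivision K33 G

end Multigraph

lemma Sym2.isDiag_map_iff' {α β : Type*} {f : α → β} (hf : Function.Injective f)
    (s : Sym2 α) : (s.map f).IsDiag ↔ s.IsDiag := by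
  induction s using Sym2.ind with
  | _ x y => simp [Sym2.mk_isDiag_iff, hf.eq_iff]

namespace Multigraph

/-- The join of `H1` and `H2` on vertices `v1` and `v2`: remove `v1` and `v2`
and match up their incident edges via the bijection `π`, joining the
corresponding other endpoints. -/
def joinGraph (H1 H2 : Multigraph) (v1 : H1.V) (v2 : H2.V)
    (π : {e : H1.E // v1 ∈ H1.ends e} ≃ {e : H2.E // v2 ∈ H2.ends e}) :
    Multigraph where
  V := {x : H1.V // x ≠ v1} ⊕ {x : H2.V // x ≠ v2}
  E := {e : H1.E // v1 ∉ H1.ends e} ⊕ {e : H2.E // v2 ∉ H2.ends e}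
       ⊕ {e : H1.E // v1 ∈ H1.ends e}
  ends e := match e with
    | .inl e => ((H1.ends e.1).attachWith (P := fun x => x ≠ v1)
        (fun _ hx hEq => e.2 (hEq ▸ hx))).map Sum.inl
    | .inr (.inl e) => ((H2.ends e.1).attachWith (P := fun x => x ≠ v2)
        (fun _ hx hEq => e.2 (hEq ▸ hx))).map Sum.inr
    | .inr (.inr e) =>
        s(Sum.inl ⟨Sym2.Mem.other' e.2, fun hEq => H1.noLoop e.1
            (by rw [← Sym2.other_spec' e.2, hEq]; exact Sym2.mk_isDiag_iff.mpr rfl)⟩,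
          Sum.inr ⟨Sym2.Mem.other' (π e).2, fun hEq => H2.noLoop (π e).1
            (by rw [← Sym2.other_spec' (π e).2, hEq]; exact Sym2.mk_isDiag_iff.mpr rfl)⟩)
  noLoop e := match e with
    | .inl e => by
        intro hd
        apply H1.noLoop e.1
        rw [← Sym2.attachWith_map_subtypeVal (s := H1.ends e.1) (P := fun x => x ≠ v1) (fun _ hx hEq => e.2 (hEq ▸ hx))]
        exact (Sym2.isDiag_map_iff' Subtype.val_injective _).mpr
          ((Sym2.isDiag_map_iff' Sum.inl_injective _).mp hd)
    | .inr (.inl e) => by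
        intro hd
        apply H2.noLoop e.1
        rw [← Sym2.attachWith_map_subtypeVal (s := H2.ends e.1) (P := fun x => x ≠ v2) (fun _ hx hEq => e.2 (hEq ▸ hx))]
        exact (Sym2.isDiag_map_iff' Subtype.val_injective _).mpr
          ((Sym2.isDiag_map_iff' Sum.inr_injective _).mp hd)
    | .inr (.inr e) => by simp [Sym2.mk_isDiag_iff]

end Multigraph

namespace Multigraph

/-- every element is `false` -/
def allF (l : List Bool) : Prop := ∀ x ∈ l, x = false

/-- we are inside or after the (unique) block of `true`s -/
def afterT : List Bool → Prop
  | [] => True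
  | true :: l => afterT l
  | false :: l => allF l

/-- the `true`s in the list are consecutive -/
def ct : List Bool → Prop
  | [] => True
  | true :: l => afterT l
  | false :: l => ct l

/-- number of alternations in a list of booleans -/
def cnt : List Bool → ℕ
  | a :: b :: l => (if a = b then 0 else 1) + cnt (b :: l)
  | _ => 0

lemma ct_of_allF : ∀ l, allF l → ct l
  | [], _ => trivial
  | a :: l, h => by
      have ha := h a (by simp)
      subst ha
      exact ct_of_allF l (fun x hx => h x (by simp [hx]))

lemma afterT_of_allT : ∀ l, (∀ x ∈ l, x = true) → afterT l
  | [], _ => trivial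
  | a :: l, h => by
      have ha := h a (by simp)
      subst ha
      exact afterT_of_allT l (fun x hx => h x (by simp [hx]))

lemma ct_of_afterT : ∀ l, afterT l → ct l
  | [], _ => trivial
  | true :: l, h => h
  | false :: l, h => ct_of_allF l h

lemma ct_tail : ∀ (a : Bool) (l), ct (a :: l) → ct l
  | true, l, h => ct_of_afterT l h
  | false, _, h => h

lemma allEq_of_cnt_zero : ∀ (a : Bool) (l), cnt (a :: l) = 0 → ∀ x ∈ l, x = a
  | a, [], _ => by simp
  | a, b :: l, h => by
      simp only [cnt] at h
      rcases Nat.add_eq_zero.mp h with ⟨h1, h2⟩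
      have hab : a = b := by by_contra hne; simp [hne] at h1
      intro x hx
      rcases List.mem_cons.mp hx with rfl | hx
      · exact hab.symm
      · exact (allEq_of_cnt_zero b l h2 x hx).trans hab.symm

lemma ct_of_cnt_le_one : ∀ l, cnt l ≤ 1 → ct l
  | [], _ => trivial
  | [a], _ => by cases a <;> trivial
  | a :: b :: l, h => by
      simp only [cnt] at h
      by_cases hab : a = b
      · subst hab
        have hc := ct_of_cnt_le_one (a :: l) (by simpa [cnt] using h)
        cases a
        · exact hc
        · exact hc
      · simp only [if_neg hab] at h
        have h0 : cnt (b :: l) = 0 := by omega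
        have hall := allEq_of_cnt_zero b l h0
        cases a
        · -- b = true, goal ct (false :: true :: l) = ct (true :: l) = afterT l
          cases b
          · exact absurd rfl hab
          · exact afterT_of_allT l hall
        · -- a = true, b = false : goal afterT (false :: l) = allF l
          cases b
          · exact hall
          · exact absurd rfl hab

lemma ct_of_cnt_le_two : ∀ l, cnt l ≤ 2 → l.head? ≠ some true → l.getLast? ≠ some true → ct l
  | [], _, _, _ => trivial
  | [a], _, h, _ => by cases a <;> trivial
  | a :: b :: l, h, hh, hl => by
      have ha : a = false := by
        cases a
        · rfl
        · exact absurd rfl hh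
      subst ha
      simp only [cnt, List.getLast?_cons_cons] at h hl
      show ct (b :: l)
      by_cases hb : b = false
      · subst hb
        exact ct_of_cnt_le_two (false :: l) (by omega) (by simp) hl
      · have hb : b = true := by cases b; exact absurd rfl hb; rfl
        subst hb
        rw [if_neg (by decide : ¬((false:Bool) = true))] at h
        exact ct_of_cnt_le_one (true :: l) (by omega)


lemma sym2_cases {α : Type*} (z : Sym2 α) : ∃ a b, z = s(a, b) := by
  induction z using Sym2.ind with
  | _ a b => exact ⟨a, b, rfl⟩

variable {G : Multigraph}

lemma Walk.support_eq_cons : ∀ {u v : G.V} (p : G.Walk u v), ∃ t, p.support = u :: t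
  | _, _, .nil _ => ⟨[], rfl⟩
  | _, _, .cons _ _ _ => ⟨_, rfl⟩

lemma Walk.support_getLast? : ∀ {u v : G.V} (p : G.Walk u v), p.support.getLast? = some v
  | _, _, .nil v => rfl
  | _, _, .cons (v := m) (w := v) e h p => by
      obtain ⟨t, ht⟩ := p.support_eq_cons
      show (_ :: p.support).getLast? = some v
      rw [ht, List.getLast?_cons_cons, ← ht, p.support_getLast?]

lemma Walk.support_head? : ∀ {u v : G.V} (p : G.Walk u v), p.support.head? = some u := by
  intro u v p
  obtain ⟨t, ht⟩ := p.support_eq_cons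
  rw [ht]; rfl

lemma Walk.cnt_parity (s : G.V → Bool) : ∀ {u v : G.V} (w : G.Walk u v),
    cnt (w.support.map s) % 2 = if s u = s v then 0 else 1
  | _, _, .nil v => by simp [Walk.support, cnt]
  | u, v, .cons (v := m) e h p => by
      obtain ⟨t, ht⟩ := p.support_eq_cons
      have IH := p.cnt_parity (s := s)
      rw [ht] at IH
      show cnt ((u :: p.support).map s) % 2 = _
      rw [ht]
      show cnt (s u :: s m :: t.map s) % 2 = _
      have hc : cnt (s u :: s m :: t.map s)
          = (if s u = s m then 0 else 1) + cnt (s m :: t.map s) := rfl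
      rw [hc]
      simp only [List.map_cons] at IH
      rw [Nat.add_mod, IH]
      cases hum : s u <;> cases hmm : s m <;> cases hv : s v <;> simp

lemma Walk.mem_support_of_mem_edges : ∀ {u v : G.V} (w : G.Walk u v) (e : G.E) (x : G.V),
    e ∈ w.edges → x ∈ G.ends e → x ∈ w.support
  | _, _, .cons (v := m) e' h p, e, x, he, hx => by
      obtain ⟨t, ht⟩ := p.support_eq_cons
      show x ∈ _ :: p.support
      rcases List.mem_cons.mp he with rfl | he
      · rw [h] at hx
        rcases Sym2.mem_iff.mp hx with rfl | rfl
        · exact List.mem_cons_self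
        · exact List.mem_cons_of_mem _ (by rw [ht]; exact List.mem_cons_self)
      · exact List.mem_cons_of_mem _ (p.mem_support_of_mem_edges e x he hx)

lemma Walk.edges_nodup_of_isPath : ∀ {u v : G.V} (w : G.Walk u v), w.IsPath → w.edges.Nodup
  | _, _, .nil _, _ => List.nodup_nil
  | u, v, .cons (v := m) e h p, hp => by
      have hp' : (u :: p.support).Nodup := hp
      rw [List.nodup_cons] at hp'
      show (e :: p.edges).Nodup
      rw [List.nodup_cons]
      refine ⟨fun he => ?_, p.edges_nodup_of_isPath hp'.2⟩
      exact hp'.1 (p.mem_support_of_mem_edges e u he (by rw [h]; exact Sym2.mem_mk_left _ _))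

/-- Transport of immersion data along a faithful morphism of multigraphs. -/
lemma Walk.transport {G' : Multigraph} (fV : G.V → G'.V) (fE : G.E → G'.E)
    (hend : ∀ e, G'.ends (fE e) = (G.ends e).map fV) :
    ∀ {u v : G.V} (w : G.Walk u v), ∃ w' : G'.Walk (fV u) (fV v),
      w'.edges = w.edges.map fE ∧ w'.support = w.support.map fV
  | _, _, .nil v => ⟨.nil _, rfl, rfl⟩
  | u, v, .cons (v := m) e h p => by
      obtain ⟨w', h1, h2⟩ := p.transport fV fE hend
      refine ⟨.cons (fE e) ?_ w', ?_, ?_⟩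
      · rw [hend, h, Sym2.map_pair_eq]
      · show fE e :: w'.edges = _; rw [h1]; rfl
      · show fV u :: w'.support = _; rw [h2]; rfl

lemma ImmersionData.transport {H G G' : Multigraph} (fV : G.V → G'.V) (fE : G.E → G'.E)
    (hV : Function.Injective fV) (hE : Function.Injective fE)
    (hend : ∀ e, G'.ends (fE e) = (G.ends e).map fV) (D : ImmersionData H G) :
    ∃ D' : ImmersionData H G', D'.vmap = fV ∘ D.vmap := by
  choose w' h1 h2 using fun e => (D.walk e).transport fV fE hend
  refine ⟨⟨fV ∘ D.vmap, hV.comp D.inj, fV ∘ D.pstart, fV ∘ D.pend, w', ?_, ?_, ?_⟩, rfl⟩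
  · intro e
    show s(fV (D.pstart e), fV (D.pend e)) = _
    rw [← Sym2.map_pair_eq, D.ends_eq e, Sym2.map_map]
  · intro e
    show ((w' e).support).Nodup
    rw [h2]
    exact (D.isPath e).map hV
  · intro e e' hne a ha ha'
    rw [h1] at ha ha'
    obtain ⟨b, hb, rfl⟩ := List.mem_map.mp ha
    obtain ⟨b', hb', hbe⟩ := List.mem_map.mp ha'
    exact D.edgeDisj e e' hne hb (by rwa [← hE hbe])


section Join

variable (H1 H2 : Multigraph) (v1 : H1.V) (v2 : H2.V)
  (π : {e : H1.E // v1 ∈ H1.ends e} ≃ {e : H2.E // v2 ∈ H2.ends e})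

/-- projection of the join graph onto `H2`, sending the `H1`-side to `v2`. -/
def proj2 : (joinGraph H1 H2 v1 v2 π).V → H2.V
  | .inl _ => v2
  | .inr y => y.1

/-- the corresponding (partial) edge map into `H2`. -/
def emap2 : (joinGraph H1 H2 v1 v2 π).E → Option H2.E
  | .inl _ => none
  | .inr (.inl f) => some f.1
  | .inr (.inr f) => some (π f).1

/-- whether an edge of the join graph is one of the "crossing" edges. -/
def isCutE : (joinGraph H1 H2 v1 v2 π).E → Bool
  | .inr (.inr _) => true
  | _ => false

lemma inl_shape (f : {e : H1.E // v1 ∉ H1.ends e}) {u m : (joinGraph H1 H2 v1 v2 π).V}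
    (h : (joinGraph H1 H2 v1 v2 π).ends (.inl f) = s(u, m)) :
    ∃ (a b : {x : H1.V // x ≠ v1}), u = Sum.inl a ∧ m = Sum.inl b := by
  have h' : Sym2.map Sum.inl ((H1.ends f.1).attachWith (P := fun x => x ≠ v1)
      (fun _ hx hEq => f.2 (hEq ▸ hx))) = s(u, m) := h
  obtain ⟨a, b, hab⟩ := sym2_cases ((H1.ends f.1).attachWith (P := fun x => x ≠ v1)
      (fun _ hx hEq => f.2 (hEq ▸ hx)))
  rw [hab, Sym2.map_pair_eq] at h'
  rcases Sym2.eq_iff.mp h' with ⟨rfl, rfl⟩ | ⟨rfl, rfl⟩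
  · exact ⟨a, b, rfl, rfl⟩
  · exact ⟨b, a, rfl, rfl⟩

lemma inr_shape (f : {e : H2.E // v2 ∉ H2.ends e}) {u m : (joinGraph H1 H2 v1 v2 π).V}
    (h : (joinGraph H1 H2 v1 v2 π).ends (.inr (.inl f)) = s(u, m)) :
    ∃ (a b : {x : H2.V // x ≠ v2}), u = Sum.inr a ∧ m = Sum.inr b ∧
      H2.ends f.1 = s(a.1, b.1) := by
  have hP : ∀ x ∈ H2.ends f.1, x ≠ v2 := fun _ hx hEq => f.2 (hEq ▸ hx)
  have h' : Sym2.map Sum.inr ((H2.ends f.1).attachWith (P := fun x => x ≠ v2) hP) = s(u, m) := h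
  obtain ⟨a, b, hab⟩ := sym2_cases ((H2.ends f.1).attachWith (P := fun x => x ≠ v2) hP)
  have hends : H2.ends f.1 = s(a.1, b.1) := by
    have := Sym2.attachWith_map_subtypeVal (s := H2.ends f.1) (P := fun x => x ≠ v2) hP
    rw [← this, hab, Sym2.map_pair_eq]
  rw [hab, Sym2.map_pair_eq] at h'
  rcases Sym2.eq_iff.mp h' with ⟨rfl, rfl⟩ | ⟨rfl, rfl⟩
  · exact ⟨a, b, rfl, rfl, hends⟩
  · exact ⟨b, a, rfl, rfl, hends.trans (Sym2.eq_swap)⟩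

lemma cut_shape (f : {e : H1.E // v1 ∈ H1.ends e}) :
    ∃ (A : {x : H1.V // x ≠ v1}) (B : {x : H2.V // x ≠ v2}),
      (joinGraph H1 H2 v1 v2 π).ends (.inr (.inr f)) = s(Sum.inl A, Sum.inr B) ∧
      H2.ends (π f).1 = s(v2, B.1) ∧ H1.ends f.1 = s(v1, A.1) :=
  ⟨_, _, rfl, (Sym2.other_spec' (π f).2).symm, (Sym2.other_spec' f.2).symm⟩

lemma cut_shape' (f : {e : H1.E // v1 ∈ H1.ends e}) {u m : (joinGraph H1 H2 v1 v2 π).V}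
    (h : (joinGraph H1 H2 v1 v2 π).ends (.inr (.inr f)) = s(u, m)) :
    (∃ (A : {x : H1.V // x ≠ v1}) (B : {x : H2.V // x ≠ v2}),
        u = Sum.inl A ∧ m = Sum.inr B ∧ H2.ends (π f).1 = s(v2, B.1)) ∨
    (∃ (A : {x : H1.V // x ≠ v1}) (B : {x : H2.V // x ≠ v2}),
        u = Sum.inr B ∧ m = Sum.inl A ∧ H2.ends (π f).1 = s(B.1, v2)) := by
  obtain ⟨A, B, hAB, hend, -⟩ := cut_shape H1 H2 v1 v2 π f
  rw [hAB] at h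
  rcases Sym2.eq_iff.mp h with ⟨rfl, rfl⟩ | ⟨rfl, rfl⟩
  · exact .inl ⟨A, B, rfl, rfl, hend⟩
  · exact .inr ⟨A, B, rfl, rfl, hend.trans Sym2.eq_swap⟩

lemma cnt_eq_cut : ∀ {u v : (joinGraph H1 H2 v1 v2 π).V} (w : (joinGraph H1 H2 v1 v2 π).Walk u v),
    cnt (w.support.map Sum.isLeft) = (w.edges.filter (isCutE H1 H2 v1 v2 π)).length
  | _, _, .nil v => rfl
  | u, v, .cons (v := m) e h p => by
      obtain ⟨t, ht⟩ := p.support_eq_cons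
      have IH := cnt_eq_cut p
      show cnt ((u :: p.support).map Sum.isLeft)
          = ((e :: p.edges).filter (isCutE H1 H2 v1 v2 π)).length
      rw [ht] at IH ⊢
      have hc : cnt (u.isLeft :: m.isLeft :: t.map Sum.isLeft)
          = (if u.isLeft = m.isLeft then 0 else 1)
            + cnt (m.isLeft :: t.map Sum.isLeft) := rfl
      change cnt (m.isLeft :: t.map Sum.isLeft) = _ at IH
      change cnt (u.isLeft :: m.isLeft :: t.map Sum.isLeft) = _
      rw [hc, IH]
      match e with
      | .inl f =>
          obtain ⟨a, b, rfl, rfl⟩ := inl_shape H1 H2 v1 v2 π f h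
          simp [isCutE]
          rfl
      | .inr (.inl f) =>
          obtain ⟨a, b, rfl, rfl, -⟩ := inr_shape H1 H2 v1 v2 π f h
          simp [isCutE]
          rfl
      | .inr (.inr f) =>
          rcases cut_shape' H1 H2 v1 v2 π f h with ⟨A, B, rfl, rfl, -⟩ | ⟨A, B, rfl, rfl, -⟩ <;>
            simp [isCutE, Nat.add_comm] <;> (rw [Nat.add_comm]; rfl)

lemma proj2_cases (y : (joinGraph H1 H2 v1 v2 π).V) :
    (∃ a, y = Sum.inl a ∧ proj2 H1 H2 v1 v2 π y = v2 ∧ y.isLeft = true) ∨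
    (∃ b, y = Sum.inr b ∧ proj2 H1 H2 v1 v2 π y = b.1 ∧ y.isLeft = false) := by
  cases y with
  | inl a => exact .inl ⟨a, rfl, rfl, rfl⟩
  | inr b => exact .inr ⟨b, rfl, rfl, rfl⟩

lemma transfer2 : ∀ {u v : (joinGraph H1 H2 v1 v2 π).V} (w : (joinGraph H1 H2 v1 v2 π).Walk u v),
    ∃ w' : H2.Walk (proj2 H1 H2 v1 v2 π u) (proj2 H1 H2 v1 v2 π v),
      w'.edges = w.edges.filterMap (emap2 H1 H2 v1 v2 π) ∧
      (∀ x ∈ w'.support, ∃ y ∈ w.support, proj2 H1 H2 v1 v2 π y = x) ∧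
      (w.support.Nodup → ct (w.support.map Sum.isLeft) → w'.support.Nodup)
  | _, _, .nil z => by
      refine ⟨.nil _, rfl, ?_, fun _ _ => List.nodup_singleton _⟩
      intro x hx
      have hx' : x ∈ [proj2 H1 H2 v1 v2 π z] := hx
      exact ⟨z, by simp [Walk.support], (List.mem_singleton.mp hx').symm⟩
  | u, v, .cons (v := m) e h p => by
      obtain ⟨w', hE, hS, hN⟩ := transfer2 p
      obtain ⟨t, ht⟩ := p.support_eq_cons
      match e with
      | .inl f =>
          obtain ⟨a, b, rfl, rfl⟩ := inl_shape H1 H2 v1 v2 π f h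
          refine ⟨w', ?_, ?_, ?_⟩
          · refine hE.trans ?_
            show _ = List.filterMap _ (_ :: p.edges)
            rfl
          · intro x hx
            obtain ⟨y, hy, hxy⟩ := hS x hx
            exact ⟨y, List.mem_cons_of_mem _ hy, hxy⟩
          · intro hnd hct
            have hnd' : (Sum.inl a :: p.support).Nodup := hnd
            exact hN (List.nodup_cons.mp hnd').2 (ct_tail _ _ hct)
      | .inr (.inl f) =>
          obtain ⟨a, b, rfl, rfl, hends⟩ := inr_shape H1 H2 v1 v2 π f h
          refine ⟨.cons f.1 (by rw [hends]; rfl) w', ?_, ?_, ?_⟩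
          · show f.1 :: w'.edges = List.filterMap _ (_ :: p.edges)
            refine (congrArg (List.cons _) hE).trans ?_
            rfl
          · intro x hx
            rcases List.mem_cons.mp hx with rfl | hx
            · exact ⟨Sum.inr a, List.mem_cons_self, rfl⟩
            · obtain ⟨y, hy, hxy⟩ := hS x hx
              exact ⟨y, List.mem_cons_of_mem _ hy, hxy⟩
          · intro hnd hct
            have hnd' : (Sum.inr a :: p.support).Nodup := hnd
            replace hnd' := List.nodup_cons.mp hnd'
            show ((a : H2.V) :: w'.support).Nodup
            rw [List.nodup_cons]
            refine ⟨fun hmem => ?_, hN hnd'.2 (ct_tail _ _ hct)⟩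
            obtain ⟨y, hy, hxy⟩ := hS _ hmem
            rcases proj2_cases H1 H2 v1 v2 π y with ⟨a', rfl, hpr, -⟩ | ⟨b', rfl, hpr, -⟩
            · exact a.2 (by rw [← hxy, hpr])
            · have : b' = a := Subtype.ext (by rw [← hxy, hpr])
              subst this
              exact hnd'.1 hy
      | .inr (.inr f) =>
          rcases cut_shape' H1 H2 v1 v2 π f h with ⟨A, B, rfl, rfl, hends⟩ |
            ⟨A, B, rfl, rfl, hends⟩
          · -- u = inl A (H1 side), m = inr B
            refine ⟨.cons (π f).1 (by rw [hends]; rfl) w', ?_, ?_, ?_⟩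
            · show (π f).1 :: w'.edges = List.filterMap _ (_ :: p.edges)
              refine (congrArg (List.cons _) hE).trans ?_
              rfl
            · intro x hx
              rcases List.mem_cons.mp hx with rfl | hx
              · exact ⟨Sum.inl A, List.mem_cons_self, rfl⟩
              · obtain ⟨y, hy, hxy⟩ := hS x hx
                exact ⟨y, List.mem_cons_of_mem _ hy, hxy⟩
            · intro hnd hct
              have hnd' : (Sum.inl A :: p.support).Nodup := hnd
              replace hnd' := List.nodup_cons.mp hnd'
              -- from ct : everything after the crossing lies on the H2 side
              have hct' : ct ((Sum.inl A :: p.support).map Sum.isLeft) := hct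
              rw [ht] at hct'
              have hAF : allF (t.map Sum.isLeft) := hct'
              have hno : ∀ y ∈ p.support, y.isLeft = false := by
                intro y hy
                rw [ht] at hy
                rcases List.mem_cons.mp hy with rfl | hy
                · rfl
                · exact hAF _ (List.mem_map_of_mem hy)
              show (v2 :: w'.support).Nodup
              rw [List.nodup_cons]
              constructor
              · intro hmem
                obtain ⟨y, hy, hxy⟩ := hS _ hmem
                rcases proj2_cases H1 H2 v1 v2 π y with ⟨a', rfl, -, hL⟩ | ⟨b', rfl, hpr, -⟩
                · rw [hno _ hy] at hL
                  cases hL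
                · exact b'.2 (by rw [← hpr, hxy])
              · refine hN hnd'.2 ?_
                rw [ht]
                show ct (t.map Sum.isLeft)
                exact ct_of_allF _ hAF
          · -- u = inr B, m = inl A
            refine ⟨.cons (π f).1 (by rw [hends]; rfl) w', ?_, ?_, ?_⟩
            · show (π f).1 :: w'.edges = List.filterMap _ (_ :: p.edges)
              refine (congrArg (List.cons _) hE).trans ?_
              rfl
            · intro x hx
              rcases List.mem_cons.mp hx with rfl | hx
              · exact ⟨Sum.inr B, List.mem_cons_self, rfl⟩
              · obtain ⟨y, hy, hxy⟩ := hS x hx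
                exact ⟨y, List.mem_cons_of_mem _ hy, hxy⟩
            · intro hnd hct
              have hnd' : (Sum.inr B :: p.support).Nodup := hnd
              replace hnd' := List.nodup_cons.mp hnd'
              show ((B : H2.V) :: w'.support).Nodup
              rw [List.nodup_cons]
              refine ⟨fun hmem => ?_, hN hnd'.2 (ct_tail _ _ hct)⟩
              obtain ⟨y, hy, hxy⟩ := hS _ hmem
              rcases proj2_cases H1 H2 v1 v2 π y with ⟨a', rfl, hpr, -⟩ | ⟨b', rfl, hpr, -⟩
              · exact B.2 (by rw [← hxy, hpr])
              · have : b' = B := Subtype.ext (by rw [← hxy, hpr])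
                subst this
                exact hnd'.1 hy

lemma emap2_inj (e e' : (joinGraph H1 H2 v1 v2 π).E) (a : H2.E)
    (h : emap2 H1 H2 v1 v2 π e = some a) (h' : emap2 H1 H2 v1 v2 π e' = some a) : e = e' := by
  match e, e' with
  | .inl f, _ => exact absurd h (by simp [emap2])
  | .inr (.inl f), .inl g => exact absurd h' (by simp [emap2])
  | .inr (.inr f), .inl g => exact absurd h' (by simp [emap2])
  | .inr (.inl f), .inr (.inl g) =>
      have : f.1 = g.1 := by
        have h1 : some f.1 = some a := h
        have h2 : some g.1 = some a := h'
        rw [Option.some_inj] at h1 h2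
        rw [h1, h2]
      rw [Subtype.ext this]
  | .inr (.inl f), .inr (.inr g) =>
      have h1 : some f.1 = some a := h
      have h2 : some (π g).1 = some a := h'
      rw [Option.some_inj] at h1 h2
      exact absurd (show v2 ∈ H2.ends f.1 by rw [h1, ← h2]; exact (π g).2) f.2
  | .inr (.inr f), .inr (.inl g) =>
      have h1 : some (π f).1 = some a := h
      have h2 : some g.1 = some a := h'
      rw [Option.some_inj] at h1 h2
      exact absurd (show v2 ∈ H2.ends g.1 by rw [h2, ← h1]; exact (π f).2) g.2
  | .inr (.inr f), .inr (.inr g) =>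
      have h1 : some (π f).1 = some a := h
      have h2 : some (π g).1 = some a := h'
      rw [Option.some_inj] at h1 h2
      have : π f = π g := Subtype.ext (by rw [h1, h2])
      rw [π.injective this]

lemma cut_card_le : (Finset.univ.filter
    fun a : (joinGraph H1 H2 v1 v2 π).E => isCutE H1 H2 v1 v2 π a = true).card = H1.deg v1 := by
  classical
  have himg : (Finset.univ.filter
      fun a : (joinGraph H1 H2 v1 v2 π).E => isCutE H1 H2 v1 v2 π a = true)
      = Finset.univ.image (fun f : {e : H1.E // v1 ∈ H1.ends e} => (.inr (.inr f) :
          (joinGraph H1 H2 v1 v2 π).E)) := by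
    ext a
    erw [Finset.mem_filter, Finset.mem_image]
    simp only [Finset.mem_univ, true_and]
    constructor
    · intro ha
      match a with
      | .inl f => exact absurd ha (by simp [isCutE])
      | .inr (.inl f) => exact absurd ha (by simp [isCutE])
      | .inr (.inr f) => exact ⟨f, rfl⟩
    · rintro ⟨f, rfl⟩
      rfl
  erw [himg, Finset.card_image_of_injective _ (fun f g hfg => Sum.inr_injective (Sum.inr_injective hfg))]
  rw [Finset.card_univ, Fintype.card_subtype]
  rfl

lemma cut_budget (D : ImmersionData K33 (joinGraph H1 H2 v1 v2 π)) :
    ∑ e : K33.E, ((D.walk e).edges.filter (isCutE H1 H2 v1 v2 π)).length ≤ H1.deg v1 := by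
  classical
  set S : K33.E → Finset (joinGraph H1 H2 v1 v2 π).E :=
    fun e => ((D.walk e).edges.filter (isCutE H1 H2 v1 v2 π)).toFinset with hS
  have hnd : ∀ e : K33.E, ((D.walk e).edges.filter (isCutE H1 H2 v1 v2 π)).Nodup :=
    fun e => ((D.walk e).edges_nodup_of_isPath (D.isPath e)).filter _
  have hcard : ∀ e : K33.E, (S e).card
      = ((D.walk e).edges.filter (isCutE H1 H2 v1 v2 π)).length :=
    fun e => List.toFinset_card_of_nodup (hnd e)
  have hdisj : ∀ e ∈ Finset.univ, ∀ e' ∈ Finset.univ, e ≠ e' → Disjoint (S e) (S e') := by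
    intro e _ e' _ hne
    rw [Finset.disjoint_left]
    intro a ha ha'
    rw [hS, List.mem_toFinset, List.mem_filter] at ha ha'
    exact D.edgeDisj e e' hne ha.1 ha'.1
  calc ∑ e : K33.E, ((D.walk e).edges.filter (isCutE H1 H2 v1 v2 π)).length
      = ∑ e : K33.E, (S e).card := by simp [hcard]
    _ = (Finset.univ.biUnion S).card := (Finset.card_biUnion hdisj).symm
    _ ≤ (Finset.univ.filter
          fun a : (joinGraph H1 H2 v1 v2 π).E => isCutE H1 H2 v1 v2 π a = true).card := by
        apply Finset.card_le_card
        intro a ha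
        rw [Finset.mem_biUnion] at ha
        obtain ⟨e, -, ha⟩ := ha
        rw [hS, List.mem_toFinset, List.mem_filter] at ha
        simp only [Finset.mem_filter, Finset.mem_univ, true_and]
        exact ha.2
    _ = H1.deg v1 := cut_card_le H1 H2 v1 v2 π

end Join

set_option maxRecDepth 10000 in
lemma k33_card3 : ∀ w0 : Fin 3 ⊕ Fin 3,
    (Finset.univ.filter fun e : Fin 3 × Fin 3 =>
      (decide (Sum.inl e.1 = w0) ≠ decide (Sum.inr e.2 = w0))).card = 3 := by decide

set_option maxRecDepth 100000 in
lemma k33_cases : ∀ f : Fin 3 ⊕ Fin 3 → Bool,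
    (Finset.univ.filter fun e : Fin 3 × Fin 3 =>
      f (Sum.inl e.1) ≠ f (Sum.inr e.2)).card ≤ 3 →
    (∀ w, f w = false) ∨ (∀ w, f w = true) ∨
    (∃ w0, f w0 = true ∧ ∀ w ≠ w0, f w = false) ∨
    (∃ w0, f w0 = false ∧ ∀ w ≠ w0, f w = true) := by decide

section Join2

variable (H1 H2 : Multigraph) (v1 : H1.V) (v2 : H2.V)
  (π : {e : H1.E // v1 ∈ H1.ends e} ≃ {e : H2.E // v2 ∈ H2.ends e})

lemma walk_ends_isLeft (D : ImmersionData K33 (joinGraph H1 H2 v1 v2 π)) (e : K33.E) :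
    ((D.pstart e).isLeft = (D.vmap (Sum.inl e.1)).isLeft
      ∧ (D.pend e).isLeft = (D.vmap (Sum.inr e.2)).isLeft)
    ∨ ((D.pstart e).isLeft = (D.vmap (Sum.inr e.2)).isLeft
      ∧ (D.pend e).isLeft = (D.vmap (Sum.inl e.1)).isLeft) := by
  have h := D.ends_eq e
  have h' : s(D.pstart e, D.pend e) = s(D.vmap (Sum.inl e.1), D.vmap (Sum.inr e.2)) := by
    rw [h]; exact Sym2.map_pair_eq _ _ _
  rw [Sym2.eq_iff] at h'
  rcases h' with ⟨h1, h2⟩ | ⟨h1, h2⟩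
  · exact .inl ⟨by rw [h1], by rw [h2]⟩
  · exact .inr ⟨by rw [h1], by rw [h2]⟩

lemma join_immerses_right (hd1 : H1.deg v1 ≤ 3)
    (D : ImmersionData K33 (joinGraph H1 H2 v1 v2 π))
    (hside : (∀ w, (D.vmap w).isLeft = false) ∨
      (∃ w0, (D.vmap w0).isLeft = true ∧ ∀ w, w ≠ w0 → (D.vmap w).isLeft = false)) :
    Immerses K33 H2 := by
  classical
  set cntE : K33.E → ℕ := fun e => cnt ((D.walk e).support.map Sum.isLeft) with hcntE
  have hbud : ∑ e : K33.E, cntE e ≤ 3 := by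
    calc ∑ e : K33.E, cntE e
        = ∑ e : K33.E, ((D.walk e).edges.filter (isCutE H1 H2 v1 v2 π)).length := by
          simp only [hcntE]
          exact Finset.sum_congr rfl fun e _ => cnt_eq_cut H1 H2 v1 v2 π (D.walk e)
      _ ≤ H1.deg v1 := cut_budget H1 H2 v1 v2 π D
      _ ≤ 3 := hd1
  have hone : ∀ e : K33.E, cntE e ≤ 3 := fun e =>
    le_trans (Finset.single_le_sum (f := cntE) (fun _ _ => Nat.zero_le _)
      (Finset.mem_univ e)) hbud
  have hparity : ∀ e : K33.E, cntE e % 2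
      = if (D.vmap (Sum.inl e.1)).isLeft = (D.vmap (Sum.inr e.2)).isLeft then 0 else 1 := by
    intro e
    have hp := (D.walk e).cnt_parity (s := Sum.isLeft)
    have hcc : cntE e = cnt ((D.walk e).support.map Sum.isLeft) := rfl
    rcases walk_ends_isLeft H1 H2 v1 v2 π D e with ⟨h1, h2⟩ | ⟨h1, h2⟩ <;>
      erw [hcc, hp, h1, h2] <;>
      cases hA : (D.vmap (Sum.inl e.1)).isLeft <;>
        cases hB : (D.vmap (Sum.inr e.2)).isLeft <;> simp
  have hct : ∀ e : K33.E, ct ((D.walk e).support.map Sum.isLeft) := by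
    rcases hside with hall | ⟨w0, hw0, hrest⟩
    · intro e
      have hs : (D.pstart e).isLeft = false := by
        rcases walk_ends_isLeft H1 H2 v1 v2 π D e with ⟨h1, -⟩ | ⟨h1, -⟩ <;> erw [h1, hall]
      have hl : (D.pend e).isLeft = false := by
        rcases walk_ends_isLeft H1 H2 v1 v2 π D e with ⟨-, h2⟩ | ⟨-, h2⟩ <;> erw [h2, hall]
      apply ct_of_cnt_le_two
      · have hpar := hparity e
        erw [hall, hall, if_pos rfl] at hpar
        have h1 := hone e
        have hcc : cntE e = cnt (List.map Sum.isLeft (D.walk e).support) := rfl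
        exact (show cntE e ≤ 2 by omega)
      · erw [List.head?_map, (D.walk e).support_head?, Option.map_some, hs]
        simp
      · erw [List.getLast?_map, (D.walk e).support_getLast?, Option.map_some, hl]
        simp
    · set C := Finset.univ.filter (fun e : Fin 3 × Fin 3 =>
        (D.vmap (Sum.inl e.1)).isLeft ≠ (D.vmap (Sum.inr e.2)).isLeft) with hC
      have hfd : ∀ w, (D.vmap w).isLeft = decide (w = w0) := by
        intro w
        by_cases hw : w = w0
        · subst hw; simp [hw0]
        · simp [hrest w hw, hw]
      have hCcard : C.card = 3 := by
        rw [hC]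
        have hfun : (fun e : Fin 3 × Fin 3 =>
            (D.vmap (Sum.inl e.1)).isLeft ≠ (D.vmap (Sum.inr e.2)).isLeft)
            = (fun e => decide (Sum.inl e.1 = w0) ≠ decide (Sum.inr e.2 = w0)) := by
          funext e; erw [hfd, hfd]; congr
        simp only [hfun]
        convert k33_card3 w0
      have hge : ∀ e ∈ C, 1 ≤ cntE e := by
        intro e he
        rw [hC, Finset.mem_filter] at he
        have hpar := hparity e
        erw [if_neg he.2] at hpar
        omega
      have h3le : 3 ≤ ∑ e ∈ C, cntE e := by
        calc (3 : ℕ) = ∑ _e ∈ C, 1 := by rw [Finset.sum_const, hCcard, smul_eq_mul]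
          _ ≤ ∑ e ∈ C, cntE e := Finset.sum_le_sum hge
      have hCbud : ∑ e ∈ C, cntE e ≤ 3 :=
        le_trans (Finset.sum_le_sum_of_subset (Finset.subset_univ C)) hbud
      have hbr : ∑ e : K33.E, cntE e = ∑ e : Fin 3 × Fin 3, cntE e := rfl
      intro e
      apply ct_of_cnt_le_one
      show cntE e ≤ 1
      by_cases he : e ∈ C
      · by_contra hcon
        push_neg at hcon
        have hlt : ∑ _x ∈ C, 1 < ∑ x ∈ C, cntE x :=
          Finset.sum_lt_sum (fun i hi => hge i hi) ⟨e, he, by omega⟩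
        rw [Finset.sum_const, hCcard, smul_eq_mul] at hlt
        omega
      · have hins : cntE e + ∑ x ∈ C, cntE x ≤ ∑ x : Fin 3 × Fin 3, cntE x := by
          calc cntE e + ∑ x ∈ C, cntE x = ∑ x ∈ insert e C, cntE x :=
                (Finset.sum_insert he).symm
            _ ≤ ∑ x : Fin 3 × Fin 3, cntE x :=
                Finset.sum_le_sum_of_subset (Finset.subset_univ _)
        omega
  -- now build the immersion into H2
  choose w' hE hS hN using fun e : K33.E => transfer2 H1 H2 v1 v2 π (D.walk e)
  have huniq : ∀ w w', (D.vmap w).isLeft = true → (D.vmap w').isLeft = true → w = w' := by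
    rcases hside with hall | ⟨w0, hw0, hrest⟩
    · intro w w' h _
      rw [hall] at h
      cases h
    · intro w w' h h'
      have h1 : w = w0 := by
        by_contra hw
        rw [hrest w hw] at h
        cases h
      have h2 : w' = w0 := by
        by_contra hw
        rw [hrest w' hw] at h'
        cases h'
      rw [h1, h2]
  have hinj : Function.Injective (fun w => proj2 H1 H2 v1 v2 π (D.vmap w)) := by
    intro w w' heq
    simp only at heq
    rcases proj2_cases H1 H2 v1 v2 π (D.vmap w) with ⟨a, ha, hpa, hLa⟩ | ⟨b, hb, hpb, hLb⟩ <;>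
      rcases proj2_cases H1 H2 v1 v2 π (D.vmap w') with ⟨a', ha', hpa', hLa'⟩ | ⟨b', hb', hpb', hLb'⟩
    · exact huniq w w' hLa hLa'
    · rw [hpa, hpb'] at heq
      exact absurd heq.symm b'.2
    · rw [hpb, hpa'] at heq
      exact absurd heq b.2
    · have hbb : b = b' := Subtype.ext (by rw [← hpb, ← hpb', heq])
      apply D.inj
      rw [hb, hb', hbb]
  refine ⟨⟨fun w => proj2 H1 H2 v1 v2 π (D.vmap w), hinj,
    fun e => proj2 H1 H2 v1 v2 π (D.pstart e), fun e => proj2 H1 H2 v1 v2 π (D.pend e),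
    w', ?_, ?_, ?_⟩⟩
  · intro e
    show s(proj2 H1 H2 v1 v2 π (D.pstart e), proj2 H1 H2 v1 v2 π (D.pend e)) = _
    rw [← Sym2.map_pair_eq (f := proj2 H1 H2 v1 v2 π), D.ends_eq e, Sym2.map_map]
    rfl
  · intro e
    exact hN e (D.isPath e) (hct e)
  · intro e e' hne a ha ha'
    rw [hE e] at ha
    rw [hE e'] at ha'
    obtain ⟨b, hb, hbe⟩ := List.mem_filterMap.mp ha
    obtain ⟨b', hb', hbe'⟩ := List.mem_filterMap.mp ha'
    have hbb := emap2_inj H1 H2 v1 v2 π b b' a hbe hbe'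
    subst hbb
    exact D.edgeDisj e e' hne hb hb'

lemma cross_card_le (hd1 : H1.deg v1 ≤ 3) (D : ImmersionData K33 (joinGraph H1 H2 v1 v2 π)) :
    (Finset.univ.filter fun e : Fin 3 × Fin 3 =>
      (D.vmap (Sum.inl e.1)).isLeft ≠ (D.vmap (Sum.inr e.2)).isLeft).card ≤ 3 := by
  classical
  set cntE : K33.E → ℕ := fun e => cnt ((D.walk e).support.map Sum.isLeft) with hcntE
  have hbud : ∑ e : K33.E, cntE e ≤ 3 := by
    calc ∑ e : K33.E, cntE e
        = ∑ e : K33.E, ((D.walk e).edges.filter (isCutE H1 H2 v1 v2 π)).length := by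
          simp only [hcntE]
          exact Finset.sum_congr rfl fun e _ => cnt_eq_cut H1 H2 v1 v2 π (D.walk e)
      _ ≤ H1.deg v1 := cut_budget H1 H2 v1 v2 π D
      _ ≤ 3 := hd1
  set C := Finset.univ.filter (fun e : Fin 3 × Fin 3 =>
    (D.vmap (Sum.inl e.1)).isLeft ≠ (D.vmap (Sum.inr e.2)).isLeft) with hC
  have hge : ∀ e ∈ C, 1 ≤ cntE e := by
    intro e he
    rw [hC, Finset.mem_filter] at he
    have hp := (D.walk e).cnt_parity (s := Sum.isLeft)
    have hne : (D.pstart e).isLeft ≠ (D.pend e).isLeft := by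
      rcases walk_ends_isLeft H1 H2 v1 v2 π D e with ⟨h1, h2⟩ | ⟨h1, h2⟩
      · rw [h1, h2]; exact he.2
      · rw [h1, h2]; exact fun hcon => he.2 hcon.symm
    rw [if_neg hne] at hp
    have hcc : cntE e % 2 = 1 := hp
    omega
  have hbr : ∑ e : K33.E, cntE e = ∑ e : Fin 3 × Fin 3, cntE e := rfl
  calc C.card = ∑ _e ∈ C, 1 := by rw [Finset.sum_const, smul_eq_mul, Nat.mul_one]
    _ ≤ ∑ e ∈ C, cntE e := Finset.sum_le_sum hge
    _ ≤ ∑ e : Fin 3 × Fin 3, cntE e := Finset.sum_le_sum_of_subset (Finset.subset_univ _)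
    _ ≤ 3 := by omega

/-- the edge map for the swap isomorphism between the two join graphs -/
def swapE : (joinGraph H1 H2 v1 v2 π).E → (joinGraph H2 H1 v2 v1 π.symm).E
  | .inl f => .inr (.inl f)
  | .inr (.inl g) => .inl g
  | .inr (.inr f) => .inr (.inr (π f))

lemma swapE_inj : Function.Injective (swapE H1 H2 v1 v2 π) := by
  intro a b h
  match a, b with
  | .inl f, .inl g =>
      have : f = g := Sum.inl_injective (Sum.inr_injective h)
      rw [this]
  | .inl f, .inr (.inl g) => exact absurd h (by simp [swapE])
  | .inl f, .inr (.inr g) => exact absurd (Sum.inr_injective (h : Sum.inr (Sum.inl f) = Sum.inr (Sum.inr (π g)))) (fun hc => by cases hc)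
  | .inr (.inl f), .inl g => exact absurd h (by simp [swapE])
  | .inr (.inr f), .inl g => exact absurd (Sum.inr_injective (h : Sum.inr (Sum.inr (π f)) = Sum.inr (Sum.inl g))) (fun hc => by cases hc)
  | .inr (.inl f), .inr (.inl g) =>
      have : f = g := Sum.inl_injective h
      rw [this]
  | .inr (.inl f), .inr (.inr g) => exact absurd h (by simp [swapE])
  | .inr (.inr f), .inr (.inl g) => exact absurd h (by simp [swapE])
  | .inr (.inr f), .inr (.inr g) =>
      have : π f = π g := Sum.inr_injective (Sum.inr_injective h)
      rw [π.injective this]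

lemma sym2_cancel {α : Type*} {v x y : α} (hx : x ≠ v) (h : s(v, x) = s(v, y)) : x = y := by
  rw [Sym2.eq_iff] at h
  rcases h with ⟨-, h⟩ | ⟨-, h⟩
  · exact h
  · exact absurd h hx

lemma swap_ends : ∀ e : (joinGraph H1 H2 v1 v2 π).E,
    (joinGraph H2 H1 v2 v1 π.symm).ends (swapE H1 H2 v1 v2 π e)
      = ((joinGraph H1 H2 v1 v2 π).ends e).map Sum.swap
  | .inl f => by
      show Sym2.map Sum.inr ((H1.ends f.1).attachWith (P := fun x => x ≠ v1)
          (fun _ hx hEq => f.2 (hEq ▸ hx)))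
        = Sym2.map Sum.swap (Sym2.map Sum.inl ((H1.ends f.1).attachWith (P := fun x => x ≠ v1)
          (fun _ hx hEq => f.2 (hEq ▸ hx))))
      rw [Sym2.map_map]
      rfl
  | .inr (.inl g) => by
      show Sym2.map Sum.inl ((H2.ends g.1).attachWith (P := fun x => x ≠ v2)
          (fun _ hx hEq => g.2 (hEq ▸ hx)))
        = Sym2.map Sum.swap (Sym2.map Sum.inr ((H2.ends g.1).attachWith (P := fun x => x ≠ v2)
          (fun _ hx hEq => g.2 (hEq ▸ hx))))
      rw [Sym2.map_map]
      rfl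
  | .inr (.inr f) => by
      obtain ⟨A, B, hJ, hB, hA⟩ := cut_shape H1 H2 v1 v2 π f
      obtain ⟨A', B', hJ', hB', hA'⟩ := cut_shape H2 H1 v2 v1 π.symm (π f)
      rw [Equiv.symm_apply_apply] at hB'
      show (joinGraph H2 H1 v2 v1 π.symm).ends (.inr (.inr (π f))) = _
      rw [hJ', hJ, Sym2.map_pair_eq]
      have h1 : A' = B := Subtype.ext (sym2_cancel A'.2 (hA'.symm.trans hB))
      have h2 : B' = A := Subtype.ext (sym2_cancel B'.2 (hB'.symm.trans hA))
      rw [h1, h2]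
      exact Sym2.eq_swap

end Join2

end Multigraph

open Multigraph in
/-- If `G` is a join of `H1` and `H2` on vertices `v1`, `v2` of degree at most
three (each `Hi` having at least three vertices), and `G` contains `K_{3,3}`
as an immersion, then `H1` or `H2` contains `K_{3,3}` as an immersion. -/
theorem k33_of_joinGraph_k33 (H1 H2 : Multigraph) (v1 : H1.V) (v2 : H2.V)
    (π : {e : H1.E // v1 ∈ H1.ends e} ≃ {e : H2.E // v2 ∈ H2.ends e})
    (hc1 : 3 ≤ Fintype.card H1.V) (hc2 : 3 ≤ Fintype.card H2.V)
    (hd1 : H1.deg v1 ≤ 3) (hd2 : H2.deg v2 ≤ 3)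
    (himm : Immerses K33 (joinGraph H1 H2 v1 v2 π)) :
    Immerses K33 H1 ∨ Immerses K33 H2 := by
  classical
  obtain ⟨D⟩ := himm
  have hcross := cross_card_le H1 H2 v1 v2 π hd1 D
  have hcases := k33_cases (fun w => (D.vmap w).isLeft) hcross
  have hswap : (∀ w : K33.V, (D.vmap w).isLeft = true) ∨
      (∃ w0, (D.vmap w0).isLeft = false ∧ ∀ w ≠ w0, (D.vmap w).isLeft = true) →
      Immerses K33 H1 := by
    intro hside
    obtain ⟨D', hD'⟩ := D.transport Sum.swap (swapE H1 H2 v1 v2 π)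
      (Function.LeftInverse.injective Sum.swap_leftInverse)
      (swapE_inj H1 H2 v1 v2 π) (swap_ends H1 H2 v1 v2 π)
    have hL : ∀ w, (D'.vmap w).isLeft = !(D.vmap w).isLeft := by
      intro w
      rw [hD']
      show (Sum.swap (D.vmap w)).isLeft = _
      cases D.vmap w <;> rfl
    apply join_immerses_right H2 H1 v2 v1 π.symm hd2 D'
    rcases hside with hall | ⟨w0, hw0, hrest⟩
    · exact .inl fun w => by rw [hL, hall]; rfl
    · exact .inr ⟨w0, by rw [hL, hw0]; rfl, fun w hw => by rw [hL, hrest w hw]; rfl⟩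
  rcases hcases with hall | hall | ⟨w0, hw0, hrest⟩ | ⟨w0, hw0, hrest⟩
  · exact .inr (join_immerses_right H1 H2 v1 v2 π hd1 D (.inl hall))
  · exact .inl (hswap (.inl hall))
  · exact .inr (join_immerses_right H1 H2 v1 v2 π hd1 D
      (.inr ⟨w0, hw0, fun w hw => hrest w hw⟩))
  · exact .inl (hswap (.inr ⟨w0, hw0, hrest⟩))
end

section
/- Every subdivision of K_5 in which at least one edge is subdivided, together with one additional path joining an internal (degree-2) vertex of a subdivided edge to a vertex not on that subdivided edge, edge-disjoint from the subdivision, contains an immersion of K_{3,3}. -/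
namespace Multigraph

variable {G : Multigraph}

namespace Walk

def append : {u v w : G.V} → G.Walk u v → G.Walk v w → G.Walk u w
  | _, _, _, .nil _, q => q
  | _, _, _, .cons e h p, q => .cons e h (p.append q)

@[simp] lemma edges_append {u v w : G.V} (p : G.Walk u v) (q : G.Walk v w) :
    (p.append q).edges = p.edges ++ q.edges := by
  induction p with
  | nil => rfl
  | cons e h p ih => simp [append, edges, ih]

@[simp] lemma support_append {u v w : G.V} (p : G.Walk u v) (q : G.Walk v w) :
    (p.append q).support = p.support ++ q.support.tail := by
  induction p with
  | nil v' => cases q <;> rfl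
  | cons e h p ih => simp [append, support, ih]

def copy {u v u' v' : G.V} (p : G.Walk u v) (hu : u = u') (hv : v = v') : G.Walk u' v' :=
  hu ▸ hv ▸ p

@[simp] lemma edges_copy {u v u' v' : G.V} (p : G.Walk u v) (hu : u = u') (hv : v = v') :
    (p.copy hu hv).edges = p.edges := by subst hu; subst hv; rfl

@[simp] lemma support_copy {u v u' v' : G.V} (p : G.Walk u v) (hu : u = u') (hv : v = v') :
    (p.copy hu hv).support = p.support := by subst hu; subst hv; rfl

def reverse : {u v : G.V} → G.Walk u v → G.Walk v u
  | _, _, .nil v => .nil v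
  | _, _, .cons e h p => p.reverse.append (.cons e (by rw [h, Sym2.eq_swap]) (.nil _))

@[simp] lemma edges_reverse {u v : G.V} (p : G.Walk u v) :
    p.reverse.edges = p.edges.reverse := by
  induction p with
  | nil => rfl
  | cons e h p ih => simp [reverse, edges, ih]

@[simp] lemma support_reverse {u v : G.V} (p : G.Walk u v) :
    p.reverse.support = p.support.reverse := by
  induction p with
  | nil => rfl
  | cons e h p ih => simp [reverse, support, ih]

@[simp] lemma start_mem_support {u v : G.V} (p : G.Walk u v) : u ∈ p.support := by
  cases p <;> simp [support]

@[simp] lemma end_mem_support {u v : G.V} (p : G.Walk u v) : v ∈ p.support := by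
  induction p with
  | nil => simp [support]
  | cons e h p ih => simp [support, ih]

lemma mem_support_of_mem_edges_s7 {u v : G.V} (p : G.Walk u v) {e : G.E} (he : e ∈ p.edges)
    {z : G.V} (hz : z ∈ G.ends e) : z ∈ p.support := by
  induction p with
  | nil => simp [edges] at he
  | cons e' h p ih =>
    simp only [edges, List.mem_cons] at he
    rcases he with rfl | he
    · rw [h] at hz
      rcases Sym2.mem_iff.mp hz with rfl | rfl
      · simp [support]
      · simp [support, start_mem_support]
    · simp [support, ih he]

lemma IsPath.edges_nodup {u v : G.V} {p : G.Walk u v} (hp : p.IsPath) : p.edges.Nodup := by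
  induction p with
  | nil => simp [edges]
  | cons e h p ih =>
    simp only [IsPath, support, List.nodup_cons] at hp
    refine List.nodup_cons.mpr ⟨fun he => ?_, ih hp.2⟩
    exact hp.1 (mem_support_of_mem_edges_s7 p he (by rw [h]; exact Sym2.mem_mk_left _ _))

lemma IsPath.reverse {u v : G.V} {p : G.Walk u v} (hp : p.IsPath) : p.reverse.IsPath := by
  simpa [IsPath] using hp

lemma IsPath.copy {u v u' v' : G.V} {p : G.Walk u v} (hp : p.IsPath) (hu : u = u') (hv : v = v') :
    (p.copy hu hv).IsPath := by simpa [IsPath] using hp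

/-- Split a walk at a vertex on its support. -/
lemma exists_split {u v : G.V} (p : G.Walk u v) {x : G.V} (hx : x ∈ p.support) :
    ∃ (q : G.Walk u x) (r : G.Walk x v),
      q.edges ++ r.edges = p.edges ∧ r.support.Sublist p.support := by
  induction p with
  | nil w =>
    simp only [support, List.mem_singleton] at hx
    subst hx
    exact ⟨.nil _, .nil _, rfl, by simp⟩
  | cons e h p ih =>
    rename_i a b c
    by_cases hxu : x = a
    · subst hxu
      exact ⟨.nil _, .cons e h p, rfl, List.Sublist.refl _⟩
    · have hx' : x ∈ p.support := by
        simpa [support, hxu] using hx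
      obtain ⟨q, r, hqr, hsub⟩ := ih hx'
      exact ⟨.cons e h q, r, by simp [edges, ← hqr], hsub.trans (by simp [support])⟩

/-- Every walk contains a path between the same endpoints using a subset of its edges. -/
lemma exists_path {u v : G.V} (p : G.Walk u v) :
    ∃ q : G.Walk u v, q.IsPath ∧ q.edges ⊆ p.edges := by
  induction p with
  | nil w => exact ⟨.nil _, by simp [IsPath, support], by simp⟩
  | cons e h p ih =>
    rename_i a b c
    obtain ⟨q, hq, hsub⟩ := ih
    by_cases ha : a ∈ q.support
    · obtain ⟨q1, r, hqr, hrsub⟩ := q.exists_split ha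
      refine ⟨r, hrsub.nodup hq, fun ed hed => ?_⟩
      have : ed ∈ q.edges := by rw [← hqr]; simp [hed]
      exact List.mem_cons_of_mem _ (hsub this)
    · refine ⟨.cons e h q, ?_, ?_⟩
      · simpa [IsPath, support, ha] using hq
      · intro ed hed
        rcases List.mem_cons.mp hed with rfl | hed
        · simp [edges]
        · exact List.mem_cons_of_mem _ (hsub hed)

end Walk

end Multigraph

namespace Multigraph

variable {G : Multigraph}

lemma disj_mono {α : Type*} {l1 l2 L1 L2 : List α} (h1 : l1 ⊆ L1) (h2 : l2 ⊆ L2)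
    (h : L1.Disjoint L2) : l1.Disjoint l2 := fun _ m1 m2 => h (h1 m1) (h2 m2)

/-- Build an immersion of `K33` from a system of nine pairwise edge-disjoint walks. -/
lemma immerses_K33_of_system (G : Multigraph)
    (T : Fin 3 × Fin 3 → Σ' u v : G.V, G.Walk u v)
    (v : Fin 3 ⊕ Fin 3 → G.V) (hv : Function.Injective v)
    (hT : ∀ e : Fin 3 × Fin 3, s((T e).1, (T e).2.1) = s(v (.inl e.1), v (.inr e.2)))
    (hd : ∀ e e', e ≠ e' → List.Disjoint (T e).2.2.edges (T e').2.2.edges) :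
    Immerses K33 G := by
  refine ⟨{
    vmap := v
    inj := hv
    pstart := fun e => (T e).1
    pend := fun e => (T e).2.1
    walk := fun e => ((T e).2.2.exists_path).choose
    ends_eq := fun e => ?_
    isPath := fun e => ((T e).2.2.exists_path).choose_spec.1
    edgeDisj := fun e e' hne => disj_mono ((T e).2.2.exists_path).choose_spec.2
      ((T e').2.2.exists_path).choose_spec.2 (hd e e' hne) }⟩
  show s((T e).1, (T e).2.1) = Sym2.map v (K33.ends e)
  rw [hT e]
  show _ = Sym2.map v s(Sum.inl e.1, Sum.inr e.2)
  rw [Sym2.map_pair_eq]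

/-- Orient a path of an immersion of `K5`. -/
lemma ImmersionData.orient (S : ImmersionData K5 G) (e : K5.E) {p q : Fin 5}
    (he : K5.ends e = s(p, q)) :
    ∃ w : G.Walk (S.vmap p) (S.vmap q), w.IsPath ∧
      (∀ ed, ed ∈ w.edges ↔ ed ∈ (S.walk e).edges) ∧
      (∀ z, z ∈ w.support ↔ z ∈ (S.walk e).support) := by
  have h : s(S.pstart e, S.pend e) = s(S.vmap p, S.vmap q) := by
    have := S.ends_eq e
    rw [he] at this
    exact this
  rcases Sym2.eq_iff.mp h with ⟨h1, h2⟩ | ⟨h1, h2⟩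
  · exact ⟨(S.walk e).copy h1 h2, (S.isPath e).copy h1 h2, by simp, by simp⟩
  · exact ⟨((S.walk e).copy h1 h2).reverse, ((S.isPath e).copy h1 h2).reverse,
      by simp, by simp⟩

/-- The edge of `K5` joining two given distinct vertices. -/
def mkE (p q : Fin 5) (h : p ≠ q) : K5.E :=
  if h' : p < q then ⟨(p, q), h'⟩ else ⟨(q, p), lt_of_le_of_ne (not_lt.mp h') (Ne.symm h)⟩

lemma ends_mkE (p q : Fin 5) (h : p ≠ q) : K5.ends (mkE p q h) = s(p, q) := by
  by_cases h' : p < q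
  · rw [show mkE p q h = ⟨(p, q), h'⟩ from dif_pos h']; rfl
  · rw [show mkE p q h = ⟨(q, p), lt_of_le_of_ne (not_lt.mp h') (Ne.symm h)⟩ from dif_neg h']
    show s(q, p) = s(p, q)
    rw [Sym2.eq_swap]

lemma K5_ends_inj {e e' : K5.E} (h : K5.ends e = K5.ends e') : e = e' := by
  obtain ⟨⟨a, b⟩, hab⟩ := e
  obtain ⟨⟨c, d⟩, hcd⟩ := e'
  simp only [K5, Sym2.eq_iff] at h hab hcd
  rcases h with ⟨rfl, rfl⟩ | ⟨rfl, rfl⟩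
  · rfl
  · omega

lemma exists_other_edge : ∀ (w : Fin 5) (e : K5.E), ∃ e' : K5.E, e' ≠ e ∧ w ∈ K5.ends e' := by
  show ∀ (w : Fin 5) (e : {p : Fin 5 × Fin 5 // p.1 < p.2}),
    ∃ e' : {p : Fin 5 × Fin 5 // p.1 < p.2}, e' ≠ e ∧ w ∈ s(e'.1.1, e'.1.2)
  decide

/-- A vertex of the subdivision lying on a branch path is the image of an endpoint. -/
lemma SubdivisionData.branch_mem (S : SubdivisionData K5 G) (e : K5.E) (w : Fin 5)
    (h : S.vmap w ∈ (S.walk e).support) : w ∈ K5.ends e := by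
  obtain ⟨e', hne, hw⟩ := exists_other_edge w e
  -- vmap w is an endpoint of walk e'
  have h2 : S.vmap w ∈ (S.walk e').support := by
    have := S.ends_eq e'
    have hw' : S.vmap w ∈ Sym2.map S.vmap (K5.ends e') := Sym2.mem_map.mpr ⟨w, hw, rfl⟩
    rw [← this, Sym2.mem_iff] at hw'
    rcases hw' with h' | h'
    · rw [h']; exact Walk.start_mem_support _
    · rw [h']; exact Walk.end_mem_support _
  obtain ⟨w', hw1, hw2, hw3⟩ := S.vtxDisj e' e hne _ h2 h
  rwa [← S.inj hw1] at hw3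

end Multigraph

namespace Multigraph

variable {G : Multigraph}

lemma compl3 : ∀ a b c : Fin 5, a ≠ b → a ≠ c → b ≠ c →
    ∃ d e : Fin 5, d ≠ e ∧ d ≠ a ∧ d ≠ b ∧ d ≠ c ∧ e ≠ a ∧ e ≠ b ∧ e ≠ c := by decide

lemma mkE_ne_mkE_left {p q p' q' : Fin 5} (h : p ≠ q) (h' : p' ≠ q')
    (h1 : p ≠ p') (h2 : p ≠ q') : mkE p q h ≠ mkE p' q' h' := by
  intro hc
  have := congrArg K5.ends hc
  rw [ends_mkE, ends_mkE] at this
  rcases Sym2.eq_iff.mp this with ⟨e1, _⟩ | ⟨e1, _⟩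
  · exact h1 e1
  · exact h2 e1

lemma mkE_ne_mkE_right {p q p' q' : Fin 5} (h : p ≠ q) (h' : p' ≠ q')
    (h1 : q ≠ p') (h2 : q ≠ q') : mkE p q h ≠ mkE p' q' h' := by
  intro hc
  have := congrArg K5.ends hc
  rw [ends_mkE, ends_mkE] at this
  rcases Sym2.eq_iff.mp this with ⟨_, e2⟩ | ⟨_, e2⟩
  · exact h2 e2
  · exact h1 e2

lemma ne_mkE_of_ends {f : K5.E} {a b p q : Fin 5} (hf : K5.ends f = s(a, b)) (h : p ≠ q)
    (h1 : p ≠ a) (h2 : p ≠ b) : f ≠ mkE p q h := by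
  intro hc
  have := congrArg K5.ends hc
  rw [ends_mkE, hf] at this
  rcases Sym2.eq_iff.mp this with ⟨e1, _⟩ | ⟨_, e2⟩
  · exact h1 e1.symm
  · exact h2 e2.symm

set_option maxHeartbeats 1000000 in
lemma configA (S : SubdivisionData K5 G)
    {a b c : Fin 5} (hab : a ≠ b) (hac : a ≠ c) (hbc : b ≠ c)
    {x : G.V} (hxint : x ∉ Set.range S.vmap)
    (e0 : K5.E) (hends0 : K5.ends e0 = s(a, b))
    (A1 : G.Walk (S.vmap a) x) (A2 : G.Walk x (S.vmap b)) (X : G.Walk x (S.vmap c))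
    (hA1 : A1.edges ⊆ (S.walk e0).edges) (hA2 : A2.edges ⊆ (S.walk e0).edges)
    (hA12 : List.Disjoint A1.edges A2.edges)
    (hX0 : List.Disjoint X.edges (S.walk e0).edges)
    (hX : ∀ f : K5.E, (∃ z ∈ K5.ends f, z ≠ a ∧ z ≠ b ∧ z ≠ c) →
      List.Disjoint X.edges (S.walk f).edges) :
    Immerses K33 G := by
  obtain ⟨d, e, hde, hda, hdb, hdc, hea, heb, hec⟩ := compl3 a b c hab hac hbc
  obtain ⟨Pda, _, hPda, _⟩ := S.toImmersionData.orient (mkE d a hda) (ends_mkE _ _ _)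
  obtain ⟨Pdb, _, hPdb, _⟩ := S.toImmersionData.orient (mkE d b hdb) (ends_mkE _ _ _)
  obtain ⟨Pdc, _, hPdc, _⟩ := S.toImmersionData.orient (mkE d c hdc) (ends_mkE _ _ _)
  obtain ⟨Pea, _, hPea, _⟩ := S.toImmersionData.orient (mkE e a hea) (ends_mkE _ _ _)
  obtain ⟨Peb, _, hPeb, _⟩ := S.toImmersionData.orient (mkE e b heb) (ends_mkE _ _ _)
  obtain ⟨Pec, _, hPec, _⟩ := S.toImmersionData.orient (mkE e c hec) (ends_mkE _ _ _)
  -- membership transfer for the reversed half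
  have hA1r : A1.reverse.edges ⊆ (S.walk e0).edges := by
    intro ed m
    rw [Walk.edges_reverse, List.mem_reverse] at m
    exact hA1 m
  -- pairwise disjointness helpers
  have hPP : ∀ (f f' : K5.E), f ≠ f' → ∀ {u v u' v' : G.V} (P : G.Walk u v) (P' : G.Walk u' v'),
      (∀ ed, ed ∈ P.edges ↔ ed ∈ (S.walk f).edges) →
      (∀ ed, ed ∈ P'.edges ↔ ed ∈ (S.walk f').edges) →
      List.Disjoint P.edges P'.edges := by
    intro f f' hne u v u' v' P P' h h' ed m1 m2
    exact S.edgeDisj f f' hne ((h ed).mp m1) ((h' ed).mp m2)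
  have hAP : ∀ (f : K5.E), e0 ≠ f → ∀ {u v u' v' : G.V} (P : G.Walk u v) (P' : G.Walk u' v'),
      P.edges ⊆ (S.walk e0).edges →
      (∀ ed, ed ∈ P'.edges ↔ ed ∈ (S.walk f).edges) →
      List.Disjoint P.edges P'.edges := by
    intro f hne u v u' v' P P' h h' ed m1 m2
    exact S.edgeDisj e0 f hne (h m1) ((h' ed).mp m2)
  have hXP : ∀ (f : K5.E), (∃ z ∈ K5.ends f, z ≠ a ∧ z ≠ b ∧ z ≠ c) →
      ∀ {u' v' : G.V} (P' : G.Walk u' v'),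
      (∀ ed, ed ∈ P'.edges ↔ ed ∈ (S.walk f).edges) →
      List.Disjoint X.edges P'.edges := by
    intro f hf u' v' P' h' ed m1 m2
    exact hX f hf m1 ((h' ed).mp m2)
  have memd : ∀ (p q : Fin 5) (h : p ≠ q), p ∈ K5.ends (mkE p q h) := by
    intro p q h
    rw [ends_mkE]
    exact Sym2.mem_mk_left _ _
  -- the 36 disjointness facts
  have d1 : List.Disjoint A1.reverse.edges A2.edges := by
    intro ed m1 m2
    rw [Walk.edges_reverse, List.mem_reverse] at m1
    exact hA12 m1 m2
  have d2 : List.Disjoint A1.reverse.edges X.edges := fun ed m1 m2 => hX0 m2 (hA1r m1)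
  have d3 : List.Disjoint A2.edges X.edges := fun ed m1 m2 => hX0 m2 (hA2 m1)
  have d4 := hAP _ (ne_mkE_of_ends hends0 hda hda hdb) A1.reverse Pda hA1r hPda
  have d5 := hAP _ (ne_mkE_of_ends hends0 hdb hda hdb) A1.reverse Pdb hA1r hPdb
  have d6 := hAP _ (ne_mkE_of_ends hends0 hdc hda hdb) A1.reverse Pdc hA1r hPdc
  have d7 := hAP _ (ne_mkE_of_ends hends0 hea hea heb) A1.reverse Pea hA1r hPea
  have d8 := hAP _ (ne_mkE_of_ends hends0 heb hea heb) A1.reverse Peb hA1r hPeb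
  have d9 := hAP _ (ne_mkE_of_ends hends0 hec hea heb) A1.reverse Pec hA1r hPec
  have d10 := hAP _ (ne_mkE_of_ends hends0 hda hda hdb) A2 Pda hA2 hPda
  have d11 := hAP _ (ne_mkE_of_ends hends0 hdb hda hdb) A2 Pdb hA2 hPdb
  have d12 := hAP _ (ne_mkE_of_ends hends0 hdc hda hdb) A2 Pdc hA2 hPdc
  have d13 := hAP _ (ne_mkE_of_ends hends0 hea hea heb) A2 Pea hA2 hPea
  have d14 := hAP _ (ne_mkE_of_ends hends0 heb hea heb) A2 Peb hA2 hPeb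
  have d15 := hAP _ (ne_mkE_of_ends hends0 hec hea heb) A2 Pec hA2 hPec
  have d16 := hXP _ ⟨d, memd d a hda, hda, hdb, hdc⟩ Pda hPda
  have d17 := hXP _ ⟨d, memd d b hdb, hda, hdb, hdc⟩ Pdb hPdb
  have d18 := hXP _ ⟨d, memd d c hdc, hda, hdb, hdc⟩ Pdc hPdc
  have d19 := hXP _ ⟨e, memd e a hea, hea, heb, hec⟩ Pea hPea
  have d20 := hXP _ ⟨e, memd e b heb, hea, heb, hec⟩ Peb hPeb
  have d21 := hXP _ ⟨e, memd e c hec, hea, heb, hec⟩ Pec hPec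
  have d22 := hPP _ _ (mkE_ne_mkE_right hda hdb hda.symm hab) Pda Pdb hPda hPdb
  have d23 := hPP _ _ (mkE_ne_mkE_right hda hdc hda.symm hac) Pda Pdc hPda hPdc
  have d24 := hPP _ _ (mkE_ne_mkE_right hdb hdc hdb.symm hbc) Pdb Pdc hPdb hPdc
  have d25 := hPP _ _ (mkE_ne_mkE_right hea heb hea.symm hab) Pea Peb hPea hPeb
  have d26 := hPP _ _ (mkE_ne_mkE_right hea hec hea.symm hac) Pea Pec hPea hPec
  have d27 := hPP _ _ (mkE_ne_mkE_right heb hec heb.symm hbc) Peb Pec hPeb hPec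
  have d28 := hPP _ _ (mkE_ne_mkE_left hda hea hde hda) Pda Pea hPda hPea
  have d29 := hPP _ _ (mkE_ne_mkE_left hda heb hde hdb) Pda Peb hPda hPeb
  have d30 := hPP _ _ (mkE_ne_mkE_left hda hec hde hdc) Pda Pec hPda hPec
  have d31 := hPP _ _ (mkE_ne_mkE_left hdb hea hde hda) Pdb Pea hPdb hPea
  have d32 := hPP _ _ (mkE_ne_mkE_left hdb heb hde hdb) Pdb Peb hPdb hPeb
  have d33 := hPP _ _ (mkE_ne_mkE_left hdb hec hde hdc) Pdb Pec hPdb hPec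
  have d34 := hPP _ _ (mkE_ne_mkE_left hdc hea hde hda) Pdc Pea hPdc hPea
  have d35 := hPP _ _ (mkE_ne_mkE_left hdc heb hde hdb) Pdc Peb hPdc hPeb
  have d36 := hPP _ _ (mkE_ne_mkE_left hdc hec hde hdc) Pdc Pec hPdc hPec
  -- distinctness of the six branch vertices
  have hxv : ∀ w : Fin 5, x ≠ S.vmap w := fun w h => hxint ⟨w, h.symm⟩
  have hvv : ∀ w w' : Fin 5, w ≠ w' → S.vmap w ≠ S.vmap w' := fun w w' h hc => h (S.inj hc)
  refine immerses_K33_of_system G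
    (fun p => ![![⟨x, S.vmap a, A1.reverse⟩, ⟨x, S.vmap b, A2⟩, ⟨x, S.vmap c, X⟩],
                ![⟨S.vmap d, S.vmap a, Pda⟩, ⟨S.vmap d, S.vmap b, Pdb⟩, ⟨S.vmap d, S.vmap c, Pdc⟩],
                ![⟨S.vmap e, S.vmap a, Pea⟩, ⟨S.vmap e, S.vmap b, Peb⟩, ⟨S.vmap e, S.vmap c, Pec⟩]]
      p.1 p.2)
    (Sum.elim ![x, S.vmap d, S.vmap e] ![S.vmap a, S.vmap b, S.vmap c]) ?_ ?_ ?_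
  · intro s t h
    have h1 := hxv a; have h2 := hxv b; have h3 := hxv c; have h4 := hxv d; have h5 := hxv e
    have g1 := hvv a b hab; have g2 := hvv a c hac; have g3 := hvv b c hbc
    have g4 := hvv d a hda; have g5 := hvv d b hdb; have g6 := hvv d c hdc
    have g7 := hvv e a hea; have g8 := hvv e b heb; have g9 := hvv e c hec
    have g10 := hvv d e hde
    rcases s with s | s <;> rcases t with t | t <;> fin_cases s <;> fin_cases t
    · rfl
    · exact absurd h (hxv d)
    · exact absurd h (hxv e)
    · exact absurd h (hxv d).symm
    · rfl
    · exact absurd h (hvv d e hde)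
    · exact absurd h (hxv e).symm
    · exact absurd h (hvv e d hde.symm)
    · rfl
    · exact absurd h (hxv a)
    · exact absurd h (hxv b)
    · exact absurd h (hxv c)
    · exact absurd h (hvv d a hda)
    · exact absurd h (hvv d b hdb)
    · exact absurd h (hvv d c hdc)
    · exact absurd h (hvv e a hea)
    · exact absurd h (hvv e b heb)
    · exact absurd h (hvv e c hec)
    · exact absurd h (hxv a).symm
    · exact absurd h (hvv a d hda.symm)
    · exact absurd h (hvv a e hea.symm)
    · exact absurd h (hxv b).symm
    · exact absurd h (hvv b d hdb.symm)
    · exact absurd h (hvv b e heb.symm)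
    · exact absurd h (hxv c).symm
    · exact absurd h (hvv c d hdc.symm)
    · exact absurd h (hvv c e hec.symm)
    · rfl
    · exact absurd h (hvv a b hab)
    · exact absurd h (hvv a c hac)
    · exact absurd h (hvv b a hab.symm)
    · rfl
    · exact absurd h (hvv b c hbc)
    · exact absurd h (hvv c a hac.symm)
    · exact absurd h (hvv c b hbc.symm)
    · rfl
  · intro p
    obtain ⟨i, j⟩ := p
    fin_cases i <;> fin_cases j <;> rfl
  · intro p q hpq
    obtain ⟨i, j⟩ := p
    obtain ⟨i', j'⟩ := q
    fin_cases i <;> fin_cases j <;> fin_cases i' <;> fin_cases j'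
    · exact absurd rfl hpq
    · exact d1
    · exact d2
    · exact d4
    · exact d5
    · exact d6
    · exact d7
    · exact d8
    · exact d9
    · exact (d1).symm
    · exact absurd rfl hpq
    · exact d3
    · exact d10
    · exact d11
    · exact d12
    · exact d13
    · exact d14
    · exact d15
    · exact (d2).symm
    · exact (d3).symm
    · exact absurd rfl hpq
    · exact d16
    · exact d17
    · exact d18
    · exact d19
    · exact d20
    · exact d21
    · exact (d4).symm
    · exact (d10).symm
    · exact (d16).symm
    · exact absurd rfl hpq
    · exact d22
    · exact d23
    · exact d28
    · exact d29
    · exact d30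
    · exact (d5).symm
    · exact (d11).symm
    · exact (d17).symm
    · exact (d22).symm
    · exact absurd rfl hpq
    · exact d24
    · exact d31
    · exact d32
    · exact d33
    · exact (d6).symm
    · exact (d12).symm
    · exact (d18).symm
    · exact (d23).symm
    · exact (d24).symm
    · exact absurd rfl hpq
    · exact d34
    · exact d35
    · exact d36
    · exact (d7).symm
    · exact (d13).symm
    · exact (d19).symm
    · exact (d28).symm
    · exact (d31).symm
    · exact (d34).symm
    · exact absurd rfl hpq
    · exact d25
    · exact d26
    · exact (d8).symm
    · exact (d14).symm
    · exact (d20).symm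
    · exact (d29).symm
    · exact (d32).symm
    · exact (d35).symm
    · exact (d25).symm
    · exact absurd rfl hpq
    · exact d27
    · exact (d9).symm
    · exact (d15).symm
    · exact (d21).symm
    · exact (d30).symm
    · exact (d33).symm
    · exact (d36).symm
    · exact (d26).symm
    · exact (d27).symm
    · exact absurd rfl hpq

end Multigraph

namespace Multigraph

variable {G : Multigraph}

lemma ne_mkE_of_ends_right {f : K5.E} {u v p q : Fin 5} (hf : K5.ends f = s(u, v)) (h : p ≠ q)
    (h1 : q ≠ u) (h2 : q ≠ v) : f ≠ mkE p q h := by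
  intro hc
  have := congrArg K5.ends hc
  rw [ends_mkE, hf] at this
  rcases Sym2.eq_iff.mp this with ⟨_, e2⟩ | ⟨e1, _⟩
  · exact h2 e2.symm
  · exact h1 e1.symm

set_option maxHeartbeats 1000000 in
lemma configB (S : SubdivisionData K5 G)
    {a b c d : Fin 5} (hab : a ≠ b) (hcd : c ≠ d)
    (hca : c ≠ a) (hcb : c ≠ b) (hda : d ≠ a) (hdb : d ≠ b)
    {x y : G.V} (hxint : x ∉ Set.range S.vmap) (hyint : y ∉ Set.range S.vmap) (hxy : x ≠ y)
    (e0 e1 : K5.E) (hends0 : K5.ends e0 = s(a, b)) (hends1 : K5.ends e1 = s(c, d))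
    (A1 : G.Walk (S.vmap a) x) (A2 : G.Walk x (S.vmap b))
    (hA1 : A1.edges ⊆ (S.walk e0).edges) (hA2 : A2.edges ⊆ (S.walk e0).edges)
    (hA12 : List.Disjoint A1.edges A2.edges)
    (B1 : G.Walk (S.vmap c) y) (B2 : G.Walk y (S.vmap d))
    (hB1 : B1.edges ⊆ (S.walk e1).edges) (hB2 : B2.edges ⊆ (S.walk e1).edges)
    (hB12 : List.Disjoint B1.edges B2.edges)
    (Q : G.Walk x y) (hQd : ∀ f : K5.E, List.Disjoint Q.edges (S.walk f).edges) :
    Immerses K33 G := by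
  obtain ⟨Pca, _, hPca0, _⟩ := S.toImmersionData.orient (mkE c a hca) (ends_mkE _ _ _)
  obtain ⟨Pcb, _, hPcb0, _⟩ := S.toImmersionData.orient (mkE c b hcb) (ends_mkE _ _ _)
  obtain ⟨Pda, _, hPda0, _⟩ := S.toImmersionData.orient (mkE d a hda) (ends_mkE _ _ _)
  obtain ⟨Pdb, _, hPdb0, _⟩ := S.toImmersionData.orient (mkE d b hdb) (ends_mkE _ _ _)
  have hPca : Pca.edges ⊆ (S.walk (mkE c a hca)).edges := fun ed m => (hPca0 ed).mp m
  have hPcb : Pcb.edges ⊆ (S.walk (mkE c b hcb)).edges := fun ed m => (hPcb0 ed).mp m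
  have hPda : Pda.edges ⊆ (S.walk (mkE d a hda)).edges := fun ed m => (hPda0 ed).mp m
  have hPdb : Pdb.edges ⊆ (S.walk (mkE d b hdb)).edges := fun ed m => (hPdb0 ed).mp m
  have hA1r : A1.reverse.edges ⊆ (S.walk e0).edges := by
    intro ed m
    rw [Walk.edges_reverse, List.mem_reverse] at m
    exact hA1 m
  have hB2r : B2.reverse.edges ⊆ (S.walk e1).edges := by
    intro ed m
    rw [Walk.edges_reverse, List.mem_reverse] at m
    exact hB2 m
  have hff : ∀ (f f' : K5.E), f ≠ f' → ∀ {u v u' v' : G.V} (P : G.Walk u v) (P' : G.Walk u' v'),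
      P.edges ⊆ (S.walk f).edges → P'.edges ⊆ (S.walk f').edges →
      List.Disjoint P.edges P'.edges := by
    intro f f' hne u v u' v' P P' h h' ed m1 m2
    exact S.edgeDisj f f' hne (h m1) (h' m2)
  have hQsub : ∀ {u' v' : G.V} (P : G.Walk u' v') (f : K5.E),
      P.edges ⊆ (S.walk f).edges → List.Disjoint Q.edges P.edges :=
    fun P f h ed m1 m2 => hQd f m1 (h m2)
  have ne01 : e0 ≠ e1 := by
    intro h
    rw [h, hends1] at hends0
    rcases Sym2.eq_iff.mp hends0 with ⟨e1, _⟩ | ⟨e1, _⟩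
    · exact hca e1
    · exact hcb e1
  have hxv : ∀ w : Fin 5, x ≠ S.vmap w := fun w h => hxint ⟨w, h.symm⟩
  have hyv : ∀ w : Fin 5, y ≠ S.vmap w := fun w h => hyint ⟨w, h.symm⟩
  have hvv : ∀ w w' : Fin 5, w ≠ w' → S.vmap w ≠ S.vmap w' := fun w w' h hc => h (S.inj hc)
  have d01 : List.Disjoint Q.edges A1.reverse.edges := hQsub A1.reverse e0 hA1r
  have d02 : List.Disjoint Q.edges A2.edges := hQsub A2 e0 hA2
  have d03 : List.Disjoint Q.edges B1.edges := hQsub B1 e1 hB1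
  have d04 : List.Disjoint Q.edges Pca.edges := hQsub Pca _ hPca
  have d05 : List.Disjoint Q.edges Pcb.edges := hQsub Pcb _ hPcb
  have d06 : List.Disjoint Q.edges B2.reverse.edges := hQsub B2.reverse e1 hB2r
  have d07 : List.Disjoint Q.edges Pda.edges := hQsub Pda _ hPda
  have d08 : List.Disjoint Q.edges Pdb.edges := hQsub Pdb _ hPdb
  have d12 : List.Disjoint A1.reverse.edges A2.edges := by
    intro ed m1 m2
    rw [Walk.edges_reverse, List.mem_reverse] at m1
    exact hA12 m1 m2
  have d13 := hff e0 e1 ne01 A1.reverse B1 hA1r hB1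
  have d14 := hff _ _ (ne_mkE_of_ends hends0 hca hca hcb) A1.reverse Pca hA1r hPca
  have d15 := hff _ _ (ne_mkE_of_ends hends0 hcb hca hcb) A1.reverse Pcb hA1r hPcb
  have d16 := hff e0 e1 ne01 A1.reverse B2.reverse hA1r hB2r
  have d17 := hff _ _ (ne_mkE_of_ends hends0 hda hda hdb) A1.reverse Pda hA1r hPda
  have d18 := hff _ _ (ne_mkE_of_ends hends0 hdb hda hdb) A1.reverse Pdb hA1r hPdb
  have d23 := hff e0 e1 ne01 A2 B1 hA2 hB1
  have d24 := hff _ _ (ne_mkE_of_ends hends0 hca hca hcb) A2 Pca hA2 hPca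
  have d25 := hff _ _ (ne_mkE_of_ends hends0 hcb hca hcb) A2 Pcb hA2 hPcb
  have d26 := hff e0 e1 ne01 A2 B2.reverse hA2 hB2r
  have d27 := hff _ _ (ne_mkE_of_ends hends0 hda hda hdb) A2 Pda hA2 hPda
  have d28 := hff _ _ (ne_mkE_of_ends hends0 hdb hda hdb) A2 Pdb hA2 hPdb
  have d34 := hff _ _ (ne_mkE_of_ends_right hends1 hca hca.symm hda.symm) B1 Pca hB1 hPca
  have d35 := hff _ _ (ne_mkE_of_ends_right hends1 hcb hcb.symm hdb.symm) B1 Pcb hB1 hPcb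
  have d36 : List.Disjoint B1.edges B2.reverse.edges := by
    intro ed m1 m2
    rw [Walk.edges_reverse, List.mem_reverse] at m2
    exact hB12 m1 m2
  have d37 := hff _ _ (ne_mkE_of_ends_right hends1 hda hca.symm hda.symm) B1 Pda hB1 hPda
  have d38 := hff _ _ (ne_mkE_of_ends_right hends1 hdb hcb.symm hdb.symm) B1 Pdb hB1 hPdb
  have d45 := hff _ _ (mkE_ne_mkE_right hca hcb hca.symm hab) Pca Pcb hPca hPcb
  have d46 := hff _ _ (ne_mkE_of_ends_right hends1 hca hca.symm hda.symm) B2.reverse Pca hB2r hPca |>.symm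
  have d47 := hff _ _ (mkE_ne_mkE_left hca hda hcd hca) Pca Pda hPca hPda
  have d48 := hff _ _ (mkE_ne_mkE_left hca hdb hcd hcb) Pca Pdb hPca hPdb
  have d56 := hff _ _ (ne_mkE_of_ends_right hends1 hcb hcb.symm hdb.symm) B2.reverse Pcb hB2r hPcb |>.symm
  have d57 := hff _ _ (mkE_ne_mkE_left hcb hda hcd hca) Pcb Pda hPcb hPda
  have d58 := hff _ _ (mkE_ne_mkE_left hcb hdb hcd hcb) Pcb Pdb hPcb hPdb
  have d67 := hff _ _ (ne_mkE_of_ends_right hends1 hda hca.symm hda.symm) B2.reverse Pda hB2r hPda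
  have d68 := hff _ _ (ne_mkE_of_ends_right hends1 hdb hcb.symm hdb.symm) B2.reverse Pdb hB2r hPdb
  have d78 := hff _ _ (mkE_ne_mkE_right hda hdb hda.symm hab) Pda Pdb hPda hPdb
  refine immerses_K33_of_system G
    (fun p => ![![⟨x, y, Q⟩, ⟨x, S.vmap a, A1.reverse⟩, ⟨x, S.vmap b, A2⟩],
                ![⟨S.vmap c, y, B1⟩, ⟨S.vmap c, S.vmap a, Pca⟩, ⟨S.vmap c, S.vmap b, Pcb⟩],
                ![⟨S.vmap d, y, B2.reverse⟩, ⟨S.vmap d, S.vmap a, Pda⟩, ⟨S.vmap d, S.vmap b, Pdb⟩]]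
      p.1 p.2)
    (Sum.elim ![x, S.vmap c, S.vmap d] ![y, S.vmap a, S.vmap b]) ?_ ?_ ?_
  · intro s t h
    rcases s with s | s <;> rcases t with t | t <;> fin_cases s <;> fin_cases t
    · rfl
    · exact absurd h (hxv c)
    · exact absurd h (hxv d)
    · exact absurd h (hxv c).symm
    · rfl
    · exact absurd h (hvv c d hcd)
    · exact absurd h (hxv d).symm
    · exact absurd h (hvv d c hcd.symm)
    · rfl
    · exact absurd h hxy
    · exact absurd h (hxv a)
    · exact absurd h (hxv b)
    · exact absurd h (hyv c).symm
    · exact absurd h (hvv c a hca)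
    · exact absurd h (hvv c b hcb)
    · exact absurd h (hyv d).symm
    · exact absurd h (hvv d a hda)
    · exact absurd h (hvv d b hdb)
    · exact absurd h hxy.symm
    · exact absurd h (hyv c)
    · exact absurd h (hyv d)
    · exact absurd h (hxv a).symm
    · exact absurd h (hvv a c hca.symm)
    · exact absurd h (hvv a d hda.symm)
    · exact absurd h (hxv b).symm
    · exact absurd h (hvv b c hcb.symm)
    · exact absurd h (hvv b d hdb.symm)
    · rfl
    · exact absurd h (hyv a)
    · exact absurd h (hyv b)
    · exact absurd h (hyv a).symm
    · rfl
    · exact absurd h (hvv a b hab)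
    · exact absurd h (hyv b).symm
    · exact absurd h (hvv b a hab.symm)
    · rfl
  · intro p
    obtain ⟨i, j⟩ := p
    fin_cases i <;> fin_cases j <;> rfl
  · intro p q hpq
    obtain ⟨i, j⟩ := p
    obtain ⟨i', j'⟩ := q
    fin_cases i <;> fin_cases j <;> fin_cases i' <;> fin_cases j'
    · exact absurd rfl hpq
    · exact d01
    · exact d02
    · exact d03
    · exact d04
    · exact d05
    · exact d06
    · exact d07
    · exact d08
    · exact (d01).symm
    · exact absurd rfl hpq
    · exact d12
    · exact d13
    · exact d14
    · exact d15
    · exact d16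
    · exact d17
    · exact d18
    · exact (d02).symm
    · exact (d12).symm
    · exact absurd rfl hpq
    · exact d23
    · exact d24
    · exact d25
    · exact d26
    · exact d27
    · exact d28
    · exact (d03).symm
    · exact (d13).symm
    · exact (d23).symm
    · exact absurd rfl hpq
    · exact d34
    · exact d35
    · exact d36
    · exact d37
    · exact d38
    · exact (d04).symm
    · exact (d14).symm
    · exact (d24).symm
    · exact (d34).symm
    · exact absurd rfl hpq
    · exact d45
    · exact d46
    · exact d47
    · exact d48
    · exact (d05).symm
    · exact (d15).symm
    · exact (d25).symm
    · exact (d35).symm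
    · exact (d45).symm
    · exact absurd rfl hpq
    · exact d56
    · exact d57
    · exact d58
    · exact (d06).symm
    · exact (d16).symm
    · exact (d26).symm
    · exact (d36).symm
    · exact (d46).symm
    · exact (d56).symm
    · exact absurd rfl hpq
    · exact d67
    · exact d68
    · exact (d07).symm
    · exact (d17).symm
    · exact (d27).symm
    · exact (d37).symm
    · exact (d47).symm
    · exact (d57).symm
    · exact (d67).symm
    · exact absurd rfl hpq
    · exact d78
    · exact (d08).symm
    · exact (d18).symm
    · exact (d28).symm
    · exact (d38).symm
    · exact (d48).symm
    · exact (d58).symm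
    · exact (d68).symm
    · exact (d78).symm
    · exact absurd rfl hpq

end Multigraph

open Multigraph in
set_option maxHeartbeats 1000000 in
/-- Every subdivision of `K_5` with at least one subdivided edge, together with
one additional path joining an internal (degree-2) vertex `x` of a subdivided
edge to a vertex `y` of the subdivision not on that subdivided edge, the path
being edge-disjoint from the subdivision, contains an immersion of `K_{3,3}`.
(The hypothesis `hcover` states that `G` consists exactly of the subdivision
together with the additional path.) -/
theorem k33_of_subdividedK5_plus_path (G : Multigraph)
    (S : SubdivisionData K5 G) (e0 : K5.E) (x : G.V)
    (hx : x ∈ (S.walk e0).support) (hxint : x ∉ Set.range S.vmap)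
    (y : G.V) (e1 : K5.E) (hy : y ∈ (S.walk e1).support)
    (hynot : y ∉ (S.walk e0).support)
    (Q : G.Walk x y) (hQ : Q.IsPath)
    (hQdisj : ∀ e : K5.E, List.Disjoint Q.edges (S.walk e).edges)
    (hcover : ∀ ed : G.E, ed ∈ Q.edges ∨ ∃ e : K5.E, ed ∈ (S.walk e).edges) :
    Immerses K33 G := by
  classical
  have hne10 : e1 ≠ e0 := fun h => hynot (h ▸ hy)
  have hxy : x ≠ y := fun h => hynot (h ▸ hx)
  obtain ⟨a, b, hab, hends0⟩ : ∃ a b : Fin 5, a ≠ b ∧ K5.ends e0 = s(a, b) := by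
    obtain ⟨⟨a, b⟩, h⟩ := e0
    exact ⟨a, b, ne_of_lt h, rfl⟩
  obtain ⟨W0, hW0p, hW0e, hW0s⟩ := S.toImmersionData.orient e0 hends0
  have hxW0 : x ∈ W0.support := (hW0s x).mpr hx
  obtain ⟨A1, A2, hAeq, -⟩ := W0.exists_split hxW0
  have hA12 : List.Disjoint A1.edges A2.edges := by
    have := hW0p.edges_nodup
    rw [← hAeq] at this
    exact (List.nodup_append'.mp this).2.2
  have hA1 : A1.edges ⊆ (S.walk e0).edges := fun ed m =>
    (hW0e ed).mp (hAeq ▸ (List.mem_append_left _ m))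
  have hA2 : A2.edges ⊆ (S.walk e0).edges := fun ed m =>
    (hW0e ed).mp (hAeq ▸ (List.mem_append_right _ m))
  have hva : S.vmap a ∈ (S.walk e0).support := (hW0s _).mp W0.start_mem_support
  have hvb : S.vmap b ∈ (S.walk e0).support := (hW0s _).mp W0.end_mem_support
  by_cases hyr : y ∈ Set.range S.vmap
  · -- `y` is a branch vertex
    obtain ⟨w, hw⟩ := hyr
    have hwa : w ≠ a := fun h => hynot (by rw [← hw, h]; exact hva)
    have hwb : w ≠ b := fun h => hynot (by rw [← hw, h]; exact hvb)
    have hQX : (Q.copy rfl hw.symm).edges = Q.edges := Q.edges_copy rfl hw.symm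
    refine configA S hab hwa.symm hwb.symm hxint e0 hends0 A1 A2 (Q.copy rfl hw.symm)
      hA1 hA2 hA12 ?_ ?_
    · rw [hQX]; exact hQdisj e0
    · intro f _; rw [hQX]; exact hQdisj f
  · -- `y` is an interior vertex of the branch path of `e1`
    obtain ⟨c, d, hcd, hends1⟩ : ∃ c d : Fin 5, c ≠ d ∧ K5.ends e1 = s(c, d) := by
      obtain ⟨⟨c, d⟩, h⟩ := e1
      exact ⟨c, d, ne_of_lt h, rfl⟩
    obtain ⟨W1, hW1p, hW1e, hW1s⟩ := S.toImmersionData.orient e1 hends1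
    have hyW1 : y ∈ W1.support := (hW1s y).mpr hy
    obtain ⟨B1, B2, hBeq, -⟩ := W1.exists_split hyW1
    have hB12 : List.Disjoint B1.edges B2.edges := by
      have := hW1p.edges_nodup
      rw [← hBeq] at this
      exact (List.nodup_append'.mp this).2.2
    have hB1 : B1.edges ⊆ (S.walk e1).edges := fun ed m =>
      (hW1e ed).mp (hBeq ▸ (List.mem_append_left _ m))
    have hB2 : B2.edges ⊆ (S.walk e1).edges := fun ed m =>
      (hW1e ed).mp (hBeq ▸ (List.mem_append_right _ m))
    by_cases hc : c = a ∨ c = b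
    · -- the shared endpoint is `c`; use `d` as the third vertex
      have hda : d ≠ a := by
        intro h
        rcases hc with h' | h'
        · exact hcd (h'.trans h.symm)
        · exact hne10 (K5_ends_inj (by rw [hends1, hends0, h, h', Sym2.eq_swap]))
      have hdb : d ≠ b := by
        intro h
        rcases hc with h' | h'
        · exact hne10 (K5_ends_inj (by rw [hends1, hends0, h, h']))
        · exact hcd (h'.trans h.symm)
      refine configA S hab hda.symm hdb.symm hxint e0 hends0 A1 A2 (Q.append B2)
        hA1 hA2 hA12 ?_ ?_
      · intro ed m1 m2
        rw [Walk.edges_append, List.mem_append] at m1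
        rcases m1 with m1 | m1
        · exact hQdisj e0 m1 m2
        · exact S.edgeDisj e1 e0 hne10 (hB2 m1) m2
      · rintro f ⟨z, hz, hza, hzb, hzd⟩ ed m1 m2
        rw [Walk.edges_append, List.mem_append] at m1
        rcases m1 with m1 | m1
        · exact hQdisj f m1 m2
        · refine S.edgeDisj e1 f (fun h => ?_) (hB2 m1) m2
          rw [← h, hends1] at hz
          replace hz := Sym2.mem_iff.mp hz
          rcases hz with rfl | rfl
          · rcases hc with h' | h'
            · exact hza h'
            · exact hzb h'
          · exact hzd rfl
    · push_neg at hc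
      obtain ⟨hca, hcb⟩ := hc
      by_cases hd : d = a ∨ d = b
      · -- the shared endpoint is `d`; use `c` as the third vertex
        refine configA S hab hca.symm hcb.symm hxint e0 hends0 A1 A2 (Q.append B1.reverse)
          hA1 hA2 hA12 ?_ ?_
        · intro ed m1 m2
          rw [Walk.edges_append, List.mem_append] at m1
          rcases m1 with m1 | m1
          · exact hQdisj e0 m1 m2
          · rw [Walk.edges_reverse, List.mem_reverse] at m1
            exact S.edgeDisj e1 e0 hne10 (hB1 m1) m2
        · rintro f ⟨z, hz, hza, hzb, hzc⟩ ed m1 m2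
          rw [Walk.edges_append, List.mem_append] at m1
          rcases m1 with m1 | m1
          · exact hQdisj f m1 m2
          · rw [Walk.edges_reverse, List.mem_reverse] at m1
            refine S.edgeDisj e1 f (fun h => ?_) (hB1 m1) m2
            rw [← h, hends1] at hz
            replace hz := Sym2.mem_iff.mp hz
            rcases hz with rfl | rfl
            · exact hzc rfl
            · rcases hd with h' | h'
              · exact hza h'
              · exact hzb h'
      · push_neg at hd
        obtain ⟨hda, hdb⟩ := hd
        exact configB S hab hcd hca hcb hda hdb hxint hyr hxy e0 e1 hends0 hends1
          A1 A2 hA1 hA2 hA12 B1 B2 hB1 hB2 hB12 Q hQdisj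
end
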